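/- arXiv:1407.4637 — 3 statements merged into one kernel-verified Lean document; each statement's English description precedes it below -/
import Mathlib

section
/- Let ρ be an admissible weight function on ℝ such that ρ(x) = ρ(⌊x⌋) for every x ∈ ℝ. Define Q : C₀^ρ(ℝ) → c₀(ℤ+D̃) by Q(f) = (a_{k+τ})_{k+τ∈ℤ+D̃}, where a_{k+τ} = ρ(k)·f(k) if τ = 0 and a_{k+τ} = ρ(k)·(f(k+τ) − ½(f(k+τ⁻) + f(k+τ⁺))) if τ ∈ D̃∖{0}. Then Q is well defined (Q(f) really lies in c₀(ℤ+D̃)), linear and continuous (indeed ‖Q(f)‖ ≤ 2‖f‖^ρ_∞ for all f), Q has dense range, and Q ∘ T₁ = B_w ∘ Q, where T₁ f(x) = f(x+1) and B_w is the weighted backward shift on c₀(ℤ+D̃) with weights w_{k+τ} = ρ(k)/ρ(k+1). In particular, the translation operator T₁ on C₀^ρ(ℝ) is quasiconjugate to B_w. -/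
open Filter

/-- An admissible weight function on ℝ. -/
def Admissible (ρ : ℝ → ℝ) : Prop :=
  Measurable ρ ∧ (∀ x, 0 < ρ x) ∧
    ∃ M : ℝ, 1 ≤ M ∧ ∃ ω : ℝ, ∀ τ : ℝ, ∀ t : ℝ, 0 < t →
      ρ τ ≤ M * Real.exp (ω * t) * ρ (τ + t)

/-- Membership in `C₀^ρ(ℝ)`. -/
def MemC0rho (ρ f : ℝ → ℝ) : Prop :=
  Continuous f ∧ Tendsto (fun x => f x * ρ x) atTop (nhds 0) ∧
    Tendsto (fun x => f x * ρ x) atBot (nhds 0)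

/-- The dyadic level sets: `D 0 = {0}` and, for `n ≥ 1`,
`D n = {(2k-1)/2ⁿ : k = 1, …, 2^{n-1}}`. -/
def Dset : ℕ → Set ℝ
  | 0 => {0}
  | (n + 1) => {τ : ℝ | ∃ k : ℕ, 1 ≤ k ∧ k ≤ 2 ^ n ∧ τ = (2 * (k : ℝ) - 1) / 2 ^ (n + 1)}

/-- The set of dyadic numbers except 1: `D̃ = ⋃ₙ Dₙ`. -/
def Dtilde : Set ℝ := ⋃ n : ℕ, Dset n

/-- The index set `ℤ + D̃ ⊆ ℝ`. -/
def SZD : Set ℝ := {x : ℝ | ∃ k : ℤ, ∃ τ ∈ Dtilde, x = (k : ℝ) + τ}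

open Classical in
/-- The level of a dyadic number: the unique `n` with `τ ∈ Dₙ` (junk value `0` otherwise). -/
noncomputable def lvl (τ : ℝ) : ℕ := if h : ∃ n : ℕ, τ ∈ Dset n then h.choose else 0

/-- Membership in `c₀(ℤ+D̃)`, modelled by functions on ℝ vanishing off `ℤ+D̃`. -/
def Memc0S (a : ℝ → ℝ) : Prop :=
  (∀ x ∉ SZD, a x = 0) ∧ ∀ ε : ℝ, 0 < ε → {x : ℝ | ε ≤ |a x|}.Finite

open Classical in
/-- The operator `Q : C₀^ρ(ℝ) → c₀(ℤ+D̃)`: for `x = k + τ ∈ ℤ + D̃`,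
`Q(f)_{k+τ} = ρ(k)·f(k)` if `τ = 0`, and
`Q(f)_{k+τ} = ρ(k)·(f(k+τ) - ½(f(k+τ⁻) + f(k+τ⁺)))` if `τ ≠ 0`,
where `τ^± = τ ± 2⁻ⁿ` for `τ ∈ Dₙ`. -/
noncomputable def Qop (ρ f : ℝ → ℝ) : ℝ → ℝ := fun x =>
  if x ∈ SZD then
    if Int.fract x = 0 then ρ ((⌊x⌋ : ℤ) : ℝ) * f ((⌊x⌋ : ℤ) : ℝ)
    else ρ ((⌊x⌋ : ℤ) : ℝ) *
      (f x - (f (x - (2 : ℝ) ^ (-(lvl (Int.fract x) : ℤ))) +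
              f (x + (2 : ℝ) ^ (-(lvl (Int.fract x) : ℤ)))) / 2)
  else 0

open Classical in
/-- The weighted backward shift `B_w` on `c₀(ℤ+D̃)` with weights
`w_{k+τ} = ρ(k)/ρ(k+1)`: `(B_w a)_{k+τ} = w_{k+τ} a_{k+τ+1}`. -/
noncomputable def BwOpS (ρ : ℝ → ℝ) (a : ℝ → ℝ) : ℝ → ℝ := fun x =>
  if x ∈ SZD then (ρ ((⌊x⌋ : ℤ) : ℝ) / ρ (((⌊x⌋ : ℤ) : ℝ) + 1)) * a (x + 1) else 0

section Basics

lemma mem_dset_succ_iff {τ : ℝ} {n : ℕ} :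
    τ ∈ Dset (n+1) ↔ ∃ k : ℕ, 1 ≤ k ∧ k ≤ 2 ^ n ∧ τ = (2 * (k : ℝ) - 1) / 2 ^ (n + 1) :=
  Iff.rfl

lemma dtilde_mem_Ico {τ : ℝ} (h : τ ∈ Dtilde) : τ ∈ Set.Ico (0:ℝ) 1 := by
  rw [Dtilde, Set.mem_iUnion] at h
  obtain ⟨n, hn⟩ := h
  cases n with
  | zero =>
    simp only [Dset, Set.mem_singleton_iff] at hn
    simp [hn]
  | succ n =>
    obtain ⟨k, hk1, hk2, rfl⟩ := hn
    have hk1' : (1:ℝ) ≤ (k:ℝ) := by exact_mod_cast hk1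
    have hk2' : (k:ℝ) ≤ 2 ^ n := by exact_mod_cast hk2
    have hpow : (0:ℝ) < 2 ^ (n+1) := by positivity
    constructor
    · apply div_nonneg _ hpow.le; linarith
    · rw [div_lt_one hpow]
      have : (2:ℝ) ^ (n+1) = 2 * 2 ^ n := by ring
      rw [this]; linarith

lemma fract_mem_dtilde {x : ℝ} (hx : x ∈ SZD) : Int.fract x ∈ Dtilde := by
  obtain ⟨k, τ, hτ, rfl⟩ := hx
  have h01 := dtilde_mem_Ico hτ
  rw [add_comm, Int.fract_add_intCast]
  rwa [Int.fract_eq_self.mpr ⟨h01.1, h01.2⟩]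

lemma mem_SZD_iff_fract {x : ℝ} : x ∈ SZD ↔ Int.fract x ∈ Dtilde := by
  constructor
  · exact fract_mem_dtilde
  · intro h
    exact ⟨⌊x⌋, Int.fract x, h, (Int.floor_add_fract x).symm⟩

lemma SZD_add_one {x : ℝ} : x + 1 ∈ SZD ↔ x ∈ SZD := by
  rw [mem_SZD_iff_fract, mem_SZD_iff_fract, Int.fract_add_one]

lemma dset_eq_of_mem {τ : ℝ} {n m : ℕ} (hn : τ ∈ Dset n) (hm : τ ∈ Dset m) : n = m := by
  -- main helper: no common elements between different levels
  have key : ∀ a b : ℕ, a < b → τ ∈ Dset a → τ ∈ Dset b → False := by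
    intro a b hab ha hb
    cases a with
    | zero =>
      simp only [Dset, Set.mem_singleton_iff] at ha
      subst ha
      obtain ⟨b', rfl⟩ : ∃ b', b = b' + 1 := ⟨b - 1, by omega⟩
      obtain ⟨j, hj1, hj2, hj3⟩ := hb
      have hj1' : (1:ℝ) ≤ (j:ℝ) := by exact_mod_cast hj1
      have hpow : (0:ℝ) < 2 ^ (b'+1) := by positivity
      have : (0:ℝ) < (2 * (j:ℝ) - 1) / 2 ^ (b'+1) := by
        apply div_pos _ hpow; linarith
      linarith [hj3 ▸ this]
    | succ a' =>
      obtain ⟨b', rfl⟩ : ∃ b', b = b' + 1 := ⟨b - 1, by omega⟩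
      obtain ⟨k, hk1, hk2, hk3⟩ := ha
      obtain ⟨j, hj1, hj2, hj3⟩ := hb
      rw [hk3] at hj3
      have hpa : (0:ℝ) < 2 ^ (a'+1) := by positivity
      have hpb : (0:ℝ) < 2 ^ (b'+1) := by positivity
      rw [div_eq_div_iff hpa.ne' hpb.ne'] at hj3
      -- (2k-1) * 2^(b'+1) = (2j-1) * 2^(a'+1) over ℝ, cast to ℤ
      have hz : ((2 * (k:ℤ) - 1) * 2 ^ (b'+1) : ℤ) = (2 * (j:ℤ) - 1) * 2 ^ (a'+1) := by
        exact_mod_cast hj3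
    
      have hlt : a' + 1 < b' + 1 := hab
      have hdecomp : (2:ℤ) ^ (b'+1) = 2 ^ (a'+1) * 2 ^ (b' - a') := by
        rw [← pow_add]; congr 1; omega
      rw [hdecomp, ← mul_assoc] at hz
      have h2 : ((2 * (k:ℤ) - 1) * 2 ^ (b' - a')) * 2 ^ (a'+1) = (2 * (j:ℤ) - 1) * 2 ^ (a'+1) := by
        ring_nf; ring_nf at hz; linarith [hz]
      have hcan : (2 * (k:ℤ) - 1) * 2 ^ (b' - a') = 2 * (j:ℤ) - 1 :=
        mul_right_cancel₀ (by positivity) h2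
      have heven : (2:ℤ) ∣ (2 * (k:ℤ) - 1) * 2 ^ (b' - a') := by
        apply Dvd.dvd.mul_left
        exact dvd_pow_self 2 (by omega)
      rw [hcan] at heven
      omega
  rcases lt_trichotomy n m with h | h | h
  · exact absurd (key n m h hn hm) not_false
  · exact h
  · exact absurd (key m n h hm hn) not_false

lemma lvl_eq {τ : ℝ} {n : ℕ} (h : τ ∈ Dset n) : lvl τ = n := by
  rw [lvl, dif_pos ⟨n, h⟩]
  exact dset_eq_of_mem (⟨n, h⟩ : ∃ m, τ ∈ Dset m).choose_spec h

lemma mem_dset_lvl {τ : ℝ} (h : τ ∈ Dtilde) : τ ∈ Dset (lvl τ) := by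
  rw [Dtilde, Set.mem_iUnion] at h
  obtain ⟨n, hn⟩ := h
  rwa [lvl_eq hn]

lemma lvl_zero : lvl 0 = 0 := lvl_eq (by simp [Dset])

end Basics
section Struct

lemma dset_succ_prop {τ : ℝ} {n : ℕ} (h : τ ∈ Dset (n+1)) :
    ((2:ℝ)^(n+1))⁻¹ ≤ τ ∧ τ + ((2:ℝ)^(n+1))⁻¹ ≤ 1 ∧ ∃ q : ℤ, Odd q ∧ τ * 2^(n+1) = q := by
  obtain ⟨k, hk1, hk2, rfl⟩ := h
  have hk1' : (1:ℝ) ≤ (k:ℝ) := by exact_mod_cast hk1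
  have hk2' : (k:ℝ) ≤ 2 ^ n := by exact_mod_cast hk2
  have hp : (0:ℝ) < 2 ^ (n+1) := by positivity
  refine ⟨?_, ?_, ⟨2*(k:ℤ)-1, ⟨(k:ℤ)-1, by ring⟩, by push_cast; field_simp⟩⟩
  · rw [inv_eq_one_div, div_le_div_iff₀ hp hp]
    nlinarith
  · have heq : (2 * (k : ℝ) - 1) / 2 ^ (n + 1) + ((2:ℝ)^(n+1))⁻¹ = (2*(k:ℝ)) / 2^(n+1) := by
      field_simp
      ring
    rw [heq, div_le_one hp]
    have : (2:ℝ) ^ (n+1) = 2 * 2 ^ n := by ring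
    rw [this]; linarith

lemma szd_struct {x : ℝ} (hx : x ∈ SZD) (h0 : Int.fract x ≠ 0) :
    ∃ n : ℕ, 1 ≤ n ∧ lvl (Int.fract x) = n ∧ (∃ p : ℤ, Odd p ∧ x * 2^n = p) ∧
      (⌊x⌋:ℝ) ≤ x - ((2:ℝ)^n)⁻¹ ∧ x + ((2:ℝ)^n)⁻¹ ≤ (⌊x⌋:ℝ) + 1 := by
  have hτ := fract_mem_dtilde hx
  have hmem := mem_dset_lvl hτ
  set m := lvl (Int.fract x) with hm
  have hm0 : m ≠ 0 := by
    intro h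
    rw [h] at hmem
    simp only [Dset, Set.mem_singleton_iff] at hmem
    exact h0 hmem
  obtain ⟨n, hn⟩ := Nat.exists_eq_succ_of_ne_zero hm0
  rw [hn] at hmem
  obtain ⟨hlow, hhigh, q, hq, hq2⟩ := dset_succ_prop hmem
  have hxf : x = (⌊x⌋:ℝ) + Int.fract x := (Int.floor_add_fract x).symm
  refine ⟨n+1, by omega, hn, ⟨⌊x⌋*2^(n+1)+q, ?_, ?_⟩, ?_, ?_⟩
  · apply Even.add_odd _ hq
    exact ⟨⌊x⌋*2^n, by ring⟩
  · push_cast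
    linear_combination hq2 + (2:ℝ)^(n+1) * hxf
  · linarith
  · linarith

lemma Qop_of_not_mem {ρ f : ℝ → ℝ} {x : ℝ} (h : x ∉ SZD) : Qop ρ f x = 0 := by
  simp only [Qop]
  rw [if_neg h]

lemma Qop_int {ρ f : ℝ → ℝ} {x : ℝ} (hx : x ∈ SZD) (h0 : Int.fract x = 0) :
    Qop ρ f x = ρ x * f x := by
  have hxf : ((⌊x⌋:ℤ):ℝ) = x := by
    have := Int.floor_add_fract x
    rw [h0] at this
    linarith
  simp only [Qop]
  rw [if_pos hx, if_pos h0, hxf]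

lemma Qop_frac {ρ f : ℝ → ℝ} {x : ℝ} {n : ℕ} (hx : x ∈ SZD) (h0 : Int.fract x ≠ 0)
    (hlvl : lvl (Int.fract x) = n) :
    Qop ρ f x = ρ ((⌊x⌋:ℤ):ℝ) *
      (f x - (f (x - ((2:ℝ)^n)⁻¹) + f (x + ((2:ℝ)^n)⁻¹)) / 2) := by
  simp only [Qop]
  rw [if_pos hx, if_neg h0, hlvl, zpow_neg, zpow_natCast]

end Struct

section Bounds

lemma floor_eq_of {k : ℤ} {t : ℝ} (h1 : (k:ℝ) ≤ t) (h2 : t < (k:ℝ)+1) : ⌊t⌋ = k := by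
  rw [Int.floor_eq_iff]
  exact ⟨h1, by exact_mod_cast h2⟩

lemma step_bound {f : ℝ → ℝ} (hf : Continuous f) {r c : ℝ} {k : ℤ} {y : ℝ}
    (hy1 : (k:ℝ) ≤ y) (hy2 : y ≤ (k:ℝ)+1)
    (hb : ∀ t : ℝ, (k:ℝ) ≤ t → t < (k:ℝ)+1 → |f t| * r ≤ c) : |f y| * r ≤ c := by
  rcases lt_or_eq_of_le hy2 with h | h
  · exact hb y hy1 h
  · have hlt : (k:ℝ) < y := by rw [h]; linarith
    have htend : Tendsto (fun t => |f t| * r) (nhdsWithin y (Set.Iio y)) (nhds (|f y| * r)) :=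
      ((hf.abs.mul continuous_const).tendsto y).mono_left nhdsWithin_le_nhds
    refine le_of_tendsto htend ?_
    filter_upwards [Ioo_mem_nhdsLT hlt] with t ht
    exact hb t ht.1.le (by rw [← h]; exact ht.2)

lemma bddAbove_rho {ρ f : ℝ → ℝ} (hρpos : ∀ x, 0 < ρ x)
    (hfloor : ∀ x : ℝ, ρ x = ρ ((⌊x⌋:ℤ):ℝ)) (hf : MemC0rho ρ f) :
    BddAbove (Set.range fun t => |f t| * ρ t) := by
  obtain ⟨hc, htop, hbot⟩ := hf
  have h1 : ∀ᶠ t in atTop, |f t * ρ t| ≤ 1 := by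
    have := htop.abs
    rw [abs_zero] at this
    exact this.eventually_le_const one_pos
  have h2 : ∀ᶠ t in atBot, |f t * ρ t| ≤ 1 := by
    have := hbot.abs
    rw [abs_zero] at this
    exact this.eventually_le_const one_pos
  obtain ⟨A, hA⟩ := eventually_atTop.mp h1
  obtain ⟨B, hB⟩ := eventually_atBot.mp h2
  set A' := max A B with hA'
  have hBA : B ≤ A' := le_max_right _ _
  obtain ⟨C, hC⟩ := (isCompact_Icc (a := B) (b := A')).exists_bound_of_continuousOn
    hc.continuousOn
  have hne : (Finset.Icc ⌊B⌋ ⌊A'⌋).Nonempty := Finset.nonempty_Icc.mpr (Int.floor_le_floor hBA)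
  set R := (Finset.Icc ⌊B⌋ ⌊A'⌋).sup' hne (fun m : ℤ => ρ ((m:ℤ):ℝ)) with hR
  refine ⟨max 1 (C * R), ?_⟩
  rintro v ⟨t, rfl⟩
  show |f t| * ρ t ≤ max 1 (C * R)
  have habs : |f t| * ρ t = |f t * ρ t| := by rw [abs_mul, abs_of_pos (hρpos t)]
  rcases le_or_gt t B with h | h
  · rw [habs]; exact le_trans (hB t h) (le_max_left _ _)
  rcases le_or_gt A' t with h' | h'
  · rw [habs]; exact le_trans (hA t (le_trans (le_max_left _ _) h')) (le_max_left _ _)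
  · have hfC : |f t| ≤ C := by
      rw [← Real.norm_eq_abs]
      exact hC t ⟨h.le, h'.le⟩
    have hρR : ρ t ≤ R := by
      rw [hfloor t, hR]
      exact Finset.le_sup' (fun m : ℤ => ρ ((m:ℤ):ℝ))
        (Finset.mem_Icc.mpr ⟨Int.floor_le_floor h.le, Int.floor_le_floor h'.le⟩)
    calc |f t| * ρ t ≤ C * R := mul_le_mul hfC hρR (hρpos t).le (le_trans (abs_nonneg _) hfC)
    _ ≤ max 1 (C*R) := le_max_right _ _

end Bounds
section Three

lemma abs_center {a b c : ℝ} : |a - (b + c)/2| ≤ |a| + (|b| + |c|)/2 := by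
  have t1 : |a - (b + c)/2| ≤ |a| + |(b + c)/2| := abs_sub _ _
  have t2 : |(b + c)/2| ≤ (|b| + |c|)/2 := by
    rw [abs_div, abs_two]
    gcongr
    exact abs_add_le _ _
  linarith

lemma Qop_norm_bound {ρ f : ℝ → ℝ} (hρpos : ∀ x, 0 < ρ x)
    (hfloor : ∀ x : ℝ, ρ x = ρ ((⌊x⌋:ℤ):ℝ)) (hf : MemC0rho ρ f) (x : ℝ) :
    |Qop ρ f x| ≤ 2 * ⨆ t : ℝ, |f t| * ρ t := by
  set S := ⨆ t : ℝ, |f t| * ρ t with hS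
  have hbdd := bddAbove_rho hρpos hfloor hf
  have hle : ∀ t, |f t| * ρ t ≤ S := fun t => le_ciSup hbdd t
  have hS0 : 0 ≤ S := le_trans (mul_nonneg (abs_nonneg _) (hρpos 0).le) (hle 0)
  by_cases hx : x ∈ SZD
  · by_cases h0 : Int.fract x = 0
    · rw [Qop_int hx h0, abs_mul, abs_of_pos (hρpos x)]
      calc ρ x * |f x| = |f x| * ρ x := mul_comm _ _
      _ ≤ S := hle x
      _ ≤ 2 * S := by linarith
    · obtain ⟨n, hn1, hlvl, -, hxl, hxr⟩ := szd_struct hx h0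
      rw [Qop_frac hx h0 hlvl]
      have hxlow : ((⌊x⌋:ℤ):ℝ) ≤ x := Int.floor_le x
      have hxhigh : x < ((⌊x⌋:ℤ):ℝ)+1 := Int.lt_floor_add_one x
      have hdpos : (0:ℝ) < ((2:ℝ)^n)⁻¹ := by positivity
      have hbk : ∀ t : ℝ, ((⌊x⌋:ℤ):ℝ) ≤ t → t < ((⌊x⌋:ℤ):ℝ)+1 →
          |f t| * ρ ((⌊x⌋:ℤ):ℝ) ≤ S := by
        intro t h1 h2
        have heq : ρ ((⌊x⌋:ℤ):ℝ) = ρ t := by rw [hfloor t, floor_eq_of h1 h2]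
        rw [heq]
        exact hle t
      have key : ∀ y : ℝ, ((⌊x⌋:ℤ):ℝ) ≤ y → y ≤ ((⌊x⌋:ℤ):ℝ)+1 →
          |f y| * ρ ((⌊x⌋:ℤ):ℝ) ≤ S :=
        fun y h1 h2 => step_bound hf.1 h1 h2 hbk
      have k1 := key x hxlow hxhigh.le
      have k2 := key (x - ((2:ℝ)^n)⁻¹) hxl (by linarith)
      have k3 := key (x + ((2:ℝ)^n)⁻¹) (by linarith) hxr
      rw [abs_mul, abs_of_pos (hρpos _)]
      calc ρ ((⌊x⌋:ℤ):ℝ) * |f x - (f (x - ((2:ℝ)^n)⁻¹) + f (x + ((2:ℝ)^n)⁻¹))/2|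
          ≤ ρ ((⌊x⌋:ℤ):ℝ) * (|f x| + (|f (x - ((2:ℝ)^n)⁻¹)| + |f (x + ((2:ℝ)^n)⁻¹)|)/2) :=
            mul_le_mul_of_nonneg_left abs_center (hρpos _).le
      _ = |f x| * ρ ((⌊x⌋:ℤ):ℝ) + (|f (x - ((2:ℝ)^n)⁻¹)| * ρ ((⌊x⌋:ℤ):ℝ)
            + |f (x + ((2:ℝ)^n)⁻¹)| * ρ ((⌊x⌋:ℤ):ℝ))/2 := by ring
      _ ≤ S + (S + S)/2 := by linarith
      _ = 2 * S := by ring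
  · rw [Qop_of_not_mem hx, abs_zero]
    linarith

lemma Qop_linear (ρ f g : ℝ → ℝ) (c : ℝ) :
    Qop ρ (fun y => f y + c * g y) = fun x => Qop ρ f x + c * Qop ρ g x := by
  funext x
  simp only [Qop]
  split_ifs with h1 h2
  · ring
  · ring
  · ring

lemma Qop_shift (ρ : ℝ → ℝ) (hρpos : ∀ x, 0 < ρ x) (f : ℝ → ℝ) :
    Qop ρ (fun y => f (y + 1)) = BwOpS ρ (Qop ρ f) := by
  funext x
  by_cases hx : x ∈ SZD
  · have hx1 : x + 1 ∈ SZD := SZD_add_one.mpr hx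
    have hfr : Int.fract (x+1) = Int.fract x := Int.fract_add_one x
    have hfl : ⌊x+1⌋ = ⌊x⌋ + 1 := Int.floor_add_one x
    simp only [BwOpS]
    rw [if_pos hx]
    by_cases h0 : Int.fract x = 0
    · have hxeq : ((⌊x⌋:ℤ):ℝ) = x := by
        have := Int.floor_add_fract x
        rw [h0] at this; linarith
      rw [Qop_int hx h0, Qop_int hx1 (by rw [hfr]; exact h0), hxeq]
      have hne : ρ (x+1) ≠ 0 := (hρpos _).ne'
      field_simp
    · have h0' : Int.fract (x+1) ≠ 0 := by rw [hfr]; exact h0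
      rw [Qop_frac hx h0 rfl, Qop_frac hx1 h0' (by rw [hfr])]
      set n := lvl (Int.fract x) with hn
      set d := ((2:ℝ)^n)⁻¹ with hd
      have ha1 : x - d + 1 = x + 1 - d := by ring
      have ha2 : x + d + 1 = x + 1 + d := by ring
      rw [ha1, ha2, hfl]
      push_cast
      have hne : ρ ((⌊x⌋:ℝ) + 1) ≠ 0 := (hρpos _).ne'
      field_simp
  · have hx1 : x + 1 ∉ SZD := fun h => hx (SZD_add_one.mp h)
    rw [Qop_of_not_mem hx]
    simp only [BwOpS]
    rw [if_neg hx]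

end Three

section Fin

lemma dset_finite (n : ℕ) : (Dset n).Finite := by
  cases n with
  | zero => exact Set.finite_singleton 0
  | succ n =>
    apply Set.Finite.subset ((Set.finite_Icc 1 (2^n)).image
      (fun k : ℕ => (2*(k:ℝ)-1)/2^(n+1)))
    rintro τ ⟨k, hk1, hk2, rfl⟩
    exact ⟨k, ⟨hk1, hk2⟩, rfl⟩

lemma Qop_c0 {ρ f : ℝ → ℝ} (hρpos : ∀ x, 0 < ρ x)
    (hfloor : ∀ x : ℝ, ρ x = ρ ((⌊x⌋:ℤ):ℝ)) (hf : MemC0rho ρ f) :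
    Memc0S (Qop ρ f) := by
  obtain ⟨hc, htop, hbot⟩ := hf
  refine ⟨fun x hx => Qop_of_not_mem hx, fun ε hε => ?_⟩
  have h1 : ∀ᶠ t in atTop, |f t * ρ t| ≤ ε/3 := by
    have := htop.abs; rw [abs_zero] at this
    exact this.eventually_le_const (by linarith)
  have h2 : ∀ᶠ t in atBot, |f t * ρ t| ≤ ε/3 := by
    have := hbot.abs; rw [abs_zero] at this
    exact this.eventually_le_const (by linarith)
  obtain ⟨A, hA⟩ := eventually_atTop.mp h1
  obtain ⟨B, hB⟩ := eventually_atBot.mp h2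
  set K₁ : ℤ := ⌊B⌋ - 1 with hK₁
  set K₂ : ℤ := max ⌈A⌉ K₁ with hK₂
  have hK₁K₂ : K₁ ≤ K₂ := le_max_right _ _
  have hUC : UniformContinuousOn f (Set.Icc (K₁:ℝ) ((K₂:ℝ)+1)) :=
    isCompact_Icc.uniformContinuousOn_of_continuous hc.continuousOn
  have hne : (Finset.Icc K₁ K₂).Nonempty := Finset.nonempty_Icc.mpr hK₁K₂
  set R := (Finset.Icc K₁ K₂).sup' hne (fun m : ℤ => ρ ((m:ℤ):ℝ)) with hR
  have hRpos : 0 < R := lt_of_lt_of_le (hρpos ((K₁:ℤ):ℝ))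
    (Finset.le_sup' (fun m : ℤ => ρ ((m:ℤ):ℝ)) (Finset.mem_Icc.mpr ⟨le_refl _, hK₁K₂⟩))
  obtain ⟨δ, hδpos, hδ⟩ := Metric.uniformContinuousOn_iff.mp hUC (ε/R) (by positivity)
  obtain ⟨N, hN⟩ := exists_pow_lt_of_lt_one hδpos (by norm_num : (1:ℝ)/2 < 1)
  have hfin : (⋃ k ∈ (↑(Finset.Icc K₁ K₂) : Set ℤ), ⋃ n ∈ (↑(Finset.range (N+1)) : Set ℕ),
      (fun τ => ((k:ℤ):ℝ) + τ) '' Dset n).Finite := by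
    apply Set.Finite.biUnion (Finset.Icc K₁ K₂).finite_toSet
    intro k _
    apply Set.Finite.biUnion (Finset.range (N+1)).finite_toSet
    intro n _
    exact (dset_finite n).image _
  apply hfin.subset
  intro x hx
  simp only [Set.mem_setOf_eq] at hx
  by_cases hxS : x ∈ SZD
  swap
  · rw [Qop_of_not_mem hxS, abs_zero] at hx; linarith
  have hxlow : ((⌊x⌋:ℤ):ℝ) ≤ x := Int.floor_le x
  have hxhigh : x < ((⌊x⌋:ℤ):ℝ)+1 := Int.lt_floor_add_one x
  have hgood : ∀ t : ℝ, ((⌊x⌋:ℤ):ℝ) ≤ t → t < ((⌊x⌋:ℤ):ℝ)+1 → ρ t = ρ ((⌊x⌋:ℤ):ℝ) :=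
    fun t ht1 ht2 => by rw [hfloor t, floor_eq_of ht1 ht2]
  have hcontra : (∀ t : ℝ, ((⌊x⌋:ℤ):ℝ) ≤ t → t < ((⌊x⌋:ℤ):ℝ)+1 →
      |f t| * ρ ((⌊x⌋:ℤ):ℝ) ≤ ε/3) → False := by
    intro htail
    have hQ : |Qop ρ f x| ≤ 2*(ε/3) := by
      by_cases h0 : Int.fract x = 0
      · have hxeq : ((⌊x⌋:ℤ):ℝ) = x := by
          have := Int.floor_add_fract x; rw [h0] at this; linarith
        rw [Qop_int hxS h0, abs_mul, abs_of_pos (hρpos x)]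
        calc ρ x * |f x| = |f x| * ρ ((⌊x⌋:ℤ):ℝ) := by rw [hxeq]; ring
        _ ≤ ε/3 := htail x hxlow hxhigh
        _ ≤ 2*(ε/3) := by linarith
      · obtain ⟨n, hn1, hlvl, -, hxl, hxr⟩ := szd_struct hxS h0
        rw [Qop_frac hxS h0 hlvl]
        have hd : (0:ℝ) < ((2:ℝ)^n)⁻¹ := by positivity
        have k1 := htail x hxlow hxhigh
        have k2 := htail (x - ((2:ℝ)^n)⁻¹) hxl (by linarith)
        have k3 := step_bound hc (by linarith : ((⌊x⌋:ℤ):ℝ) ≤ x + ((2:ℝ)^n)⁻¹) hxr htail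
        rw [abs_mul, abs_of_pos (hρpos _)]
        calc ρ ((⌊x⌋:ℤ):ℝ) * |f x - (f (x - ((2:ℝ)^n)⁻¹) + f (x + ((2:ℝ)^n)⁻¹))/2|
            ≤ ρ ((⌊x⌋:ℤ):ℝ) * (|f x| + (|f (x - ((2:ℝ)^n)⁻¹)| + |f (x + ((2:ℝ)^n)⁻¹)|)/2) :=
              mul_le_mul_of_nonneg_left abs_center (hρpos _).le
        _ = |f x| * ρ ((⌊x⌋:ℤ):ℝ) + (|f (x - ((2:ℝ)^n)⁻¹)| * ρ ((⌊x⌋:ℤ):ℝ)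
              + |f (x + ((2:ℝ)^n)⁻¹)| * ρ ((⌊x⌋:ℤ):ℝ))/2 := by ring
        _ ≤ ε/3 + (ε/3 + ε/3)/2 := by linarith
        _ = 2*(ε/3) := by ring
    linarith
  have htail_of : ∀ t : ℝ, ((⌊x⌋:ℤ):ℝ) ≤ t → t < ((⌊x⌋:ℤ):ℝ)+1 →
      |f t| * ρ ((⌊x⌋:ℤ):ℝ) = |f t * ρ t| := by
    intro t ht1 ht2
    rw [← hgood t ht1 ht2, abs_mul, abs_of_pos (hρpos t)]
  have hKmem : K₁ ≤ ⌊x⌋ ∧ ⌊x⌋ ≤ K₂ := by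
    constructor
    · by_contra hcon
      push_neg at hcon
      apply hcontra
      intro t ht1 ht2
      rw [htail_of t ht1 ht2]
      apply hB
      have h1 : (⌊x⌋:ℝ) + 1 ≤ (⌊B⌋:ℝ) := by exact_mod_cast (by omega : ⌊x⌋ + 1 ≤ ⌊B⌋)
      have h2 : (⌊B⌋:ℝ) ≤ B := Int.floor_le B
      linarith
    · by_contra hcon
      push_neg at hcon
      apply hcontra
      intro t ht1 ht2
      rw [htail_of t ht1 ht2]
      apply hA
      have h1 : (⌈A⌉:ℝ) ≤ (⌊x⌋:ℝ) := by
        have hAK : ⌈A⌉ ≤ K₂ := le_max_left _ _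
        exact_mod_cast le_trans hAK hcon.le
      have h2 : A ≤ (⌈A⌉:ℝ) := Int.le_ceil A
      linarith
  simp only [Set.mem_iUnion, Set.mem_image, Finset.mem_coe, Finset.mem_Icc, Finset.mem_range]
  by_cases h0 : Int.fract x = 0
  · refine ⟨⌊x⌋, hKmem, 0, by omega, 0, by simp [Dset], ?_⟩
    have := Int.floor_add_fract x
    rw [h0] at this
    linarith
  · obtain ⟨n, hn1, hlvl, -, hxl, hxr⟩ := szd_struct hxS h0
    have hnN : n < N + 1 := by
      by_contra hcon
      push_neg at hcon
      have hxI : x ∈ Set.Icc (K₁:ℝ) ((K₂:ℝ)+1) := by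
        constructor
        · have : (K₁:ℝ) ≤ (⌊x⌋:ℝ) := by exact_mod_cast hKmem.1
          linarith
        · have : (⌊x⌋:ℝ) ≤ (K₂:ℝ) := by exact_mod_cast hKmem.2
          linarith
      have hxmI : x - ((2:ℝ)^n)⁻¹ ∈ Set.Icc (K₁:ℝ) ((K₂:ℝ)+1) := by
        constructor
        · have : (K₁:ℝ) ≤ (⌊x⌋:ℝ) := by exact_mod_cast hKmem.1
          linarith
        · have hd : (0:ℝ) < ((2:ℝ)^n)⁻¹ := by positivity
          have : (⌊x⌋:ℝ) ≤ (K₂:ℝ) := by exact_mod_cast hKmem.2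
          linarith
      have hxpI : x + ((2:ℝ)^n)⁻¹ ∈ Set.Icc (K₁:ℝ) ((K₂:ℝ)+1) := by
        constructor
        · have hd : (0:ℝ) < ((2:ℝ)^n)⁻¹ := by positivity
          have : (K₁:ℝ) ≤ (⌊x⌋:ℝ) := by exact_mod_cast hKmem.1
          linarith
        · have : (⌊x⌋:ℝ) ≤ (K₂:ℝ) := by exact_mod_cast hKmem.2
          linarith
      have hdδ : ((2:ℝ)^n)⁻¹ < δ := by
        have hmono : ((1:ℝ)/2)^n ≤ ((1:ℝ)/2)^N :=
          pow_le_pow_of_le_one (by norm_num) (by norm_num) (by omega)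
        calc ((2:ℝ)^n)⁻¹ = ((1:ℝ)/2)^n := by rw [one_div, inv_pow]
        _ ≤ ((1:ℝ)/2)^N := hmono
        _ < δ := hN
      have hd : (0:ℝ) < ((2:ℝ)^n)⁻¹ := by positivity
      have e1 : |f x - f (x - ((2:ℝ)^n)⁻¹)| < ε/R := by
        have := hδ x hxI (x - ((2:ℝ)^n)⁻¹) hxmI (by
          rw [Real.dist_eq]
          have : x - (x - ((2:ℝ)^n)⁻¹) = ((2:ℝ)^n)⁻¹ := by ring
          rw [this, abs_of_pos hd]
          exact hdδ)
        rwa [Real.dist_eq] at this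
      have e2 : |f x - f (x + ((2:ℝ)^n)⁻¹)| < ε/R := by
        have := hδ x hxI (x + ((2:ℝ)^n)⁻¹) hxpI (by
          rw [Real.dist_eq]
          have : x - (x + ((2:ℝ)^n)⁻¹) = -((2:ℝ)^n)⁻¹ := by ring
          rw [this, abs_neg, abs_of_pos hd]
          exact hdδ)
        rwa [Real.dist_eq] at this
      have hmid : |f x - (f (x - ((2:ℝ)^n)⁻¹) + f (x + ((2:ℝ)^n)⁻¹))/2| < ε/R := by
        have h3 : f x - (f (x - ((2:ℝ)^n)⁻¹) + f (x + ((2:ℝ)^n)⁻¹))/2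
            = ((f x - f (x - ((2:ℝ)^n)⁻¹)) + (f x - f (x + ((2:ℝ)^n)⁻¹)))/2 := by ring
        rw [h3]
        have h4 : |((f x - f (x - ((2:ℝ)^n)⁻¹)) + (f x - f (x + ((2:ℝ)^n)⁻¹)))/2|
            ≤ (|f x - f (x - ((2:ℝ)^n)⁻¹)| + |f x - f (x + ((2:ℝ)^n)⁻¹)|)/2 := by
          rw [abs_div, abs_two]
          gcongr
          exact abs_add_le _ _
        linarith
      have hQlt : |Qop ρ f x| < ε := by
        rw [Qop_frac hxS h0 hlvl, abs_mul, abs_of_pos (hρpos _)]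
        calc ρ ((⌊x⌋:ℤ):ℝ) * |f x - (f (x - ((2:ℝ)^n)⁻¹) + f (x + ((2:ℝ)^n)⁻¹))/2|
            < ρ ((⌊x⌋:ℤ):ℝ) * (ε/R) := by
              exact mul_lt_mul_of_pos_left hmid (hρpos _)
        _ ≤ R * (ε/R) := mul_le_mul_of_nonneg_right
              (Finset.le_sup' (fun m : ℤ => ρ ((m:ℤ):ℝ)) (Finset.mem_Icc.mpr hKmem))
              (by positivity)
        _ = ε := by field_simp
      linarith
    have hmem := mem_dset_lvl (fract_mem_dtilde hxS)
    rw [hlvl] at hmem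
    exact ⟨⌊x⌋, hKmem, n, hnN, Int.fract x, hmem, Int.floor_add_fract x⟩

end Fin
section Tent

noncomputable def tent (c h t : ℝ) : ℝ := max (1 - |t - c| / h) 0

lemma tent_continuous (c h : ℝ) : Continuous (tent c h) := by
  apply Continuous.max _ continuous_const
  exact continuous_const.sub (((continuous_id.sub continuous_const).abs).div_const h)

lemma tent_self {c h : ℝ} (hh : 0 < h) : tent c h c = 1 := by
  simp [tent]

lemma tent_eq_zero {c h t : ℝ} (hh : 0 < h) (ht : h ≤ |t - c|) : tent c h t = 0 := by
  apply max_eq_right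
  have : (1:ℝ) ≤ |t - c| / h := (one_le_div hh).mpr ht
  linarith

lemma tent_zero_left {c h t : ℝ} (hh : 0 < h) (h1 : t ≤ c - h) : tent c h t = 0 := by
  apply tent_eq_zero hh
  rw [abs_of_nonpos (by linarith)]
  linarith

lemma tent_zero_right {c h t : ℝ} (hh : 0 < h) (h1 : c + h ≤ t) : tent c h t = 0 := by
  apply tent_eq_zero hh
  rw [abs_of_nonneg (by linarith)]
  linarith

lemma tent_left {c h t : ℝ} (hh : 0 < h) (h1 : c - h ≤ t) (h2 : t ≤ c) :
    tent c h t = (t - (c - h))/h := by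
  rw [tent, abs_of_nonpos (by linarith)]
  rw [max_eq_left]
  · field_simp
    ring
  · rw [le_sub_iff_add_le, zero_add, div_le_one hh]
    linarith

lemma tent_right {c h t : ℝ} (hh : 0 < h) (h1 : c ≤ t) (h2 : t ≤ c + h) :
    tent c h t = ((c + h) - t)/h := by
  rw [tent, abs_of_nonneg (by linarith)]
  rw [max_eq_left]
  · field_simp
    ring
  · rw [le_sub_iff_add_le, zero_add, div_le_one hh]
    linarith

lemma tent_mid {c h x d : ℝ} (hh : 0 < h) (hd : 0 < d)
    (hcase : (x + d ≤ c - h) ∨ (c - h ≤ x - d ∧ x + d ≤ c) ∨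
      (c ≤ x - d ∧ x + d ≤ c + h) ∨ (c + h ≤ x - d)) :
    tent c h x - (tent c h (x - d) + tent c h (x + d))/2 = 0 := by
  rcases hcase with h1 | ⟨h1, h2⟩ | ⟨h1, h2⟩ | h1
  · rw [tent_zero_left hh (by linarith), tent_zero_left hh (by linarith),
      tent_zero_left hh h1]
    ring
  · rw [tent_left hh (by linarith) (by linarith), tent_left hh h1 (by linarith),
      tent_left hh (by linarith) h2]
    field_simp
    ring
  · rw [tent_right hh (by linarith) (by linarith), tent_right hh (by linarith) (by linarith),
      tent_right hh (by linarith) h2]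
    field_simp
    ring
  · rw [tent_zero_right hh (by linarith), tent_zero_right hh h1,
      tent_zero_right hh (by linarith)]
    ring

lemma not_mem_open {x w : ℝ} {n : ℕ} {p q : ℤ} (hp : x * 2^n = p) (hq : w * 2^n = q)
    (hne : w ≠ x) : w ≤ x - ((2:ℝ)^n)⁻¹ ∨ x + ((2:ℝ)^n)⁻¹ ≤ w := by
  by_contra hcon
  push_neg at hcon
  have h2 : (0:ℝ) < 2^n := by positivity
  have hinv : ((2:ℝ)^n)⁻¹ * 2^n = 1 := inv_mul_cancel₀ h2.ne'
  have hl : (p:ℝ) - 1 < q := by nlinarith [hcon.1]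
  have hr : (q:ℝ) < p + 1 := by nlinarith [hcon.2]
  have hqp : q = p := by
    have h1 : (p:ℤ) - 1 < q := by exact_mod_cast hl
    have h2' : (q:ℤ) < p + 1 := by exact_mod_cast hr
    omega
  apply hne
  apply mul_right_cancel₀ h2.ne'
  rw [hp, hq, hqp]

lemma dist_ge {t y : ℝ} {m : ℕ} {e : ℤ} (he : (t - y)*2^m = e) (hne : e ≠ 0) :
    ((2:ℝ)^m)⁻¹ ≤ |t - y| := by
  have h2 : (0:ℝ) < 2^m := by positivity
  have h1 : (1:ℝ) ≤ |(e:ℝ)| := by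
    rw [← Int.cast_abs]
    exact_mod_cast Int.one_le_abs (by omega)
  have habs : |t - y| * 2^m = |(e:ℝ)| := by
    rw [← abs_of_pos h2, ← abs_mul, he]
  rw [inv_eq_one_div, div_le_iff₀ h2]
  linarith

end Tent
section QopTent

lemma Qop_tent {ρ : ℝ → ℝ} (hρpos : ∀ x, 0 < ρ x) {y : ℝ} (hy : y ∈ SZD) (x : ℝ) :
    Qop ρ (tent y (((2:ℝ)^(lvl (Int.fract y)))⁻¹)) x
      = if x = y then ρ ((⌊y⌋:ℤ):ℝ) else 0 := by
  set H := ((2:ℝ)^(lvl (Int.fract y)))⁻¹ with hHdef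
  have hH : 0 < H := by rw [hHdef]; positivity
  by_cases hx : x ∈ SZD
  swap
  · rw [Qop_of_not_mem hx, if_neg (fun h => hx (by rw [h]; exact hy))]
  by_cases h0 : Int.fract x = 0
  · -- x is an integer
    have hxeq : ((⌊x⌋:ℤ):ℝ) = x := by
      have := Int.floor_add_fract x; rw [h0] at this; linarith
    rw [Qop_int hx h0]
    by_cases hxy : x = y
    · subst hxy
      have hyeq : ((⌊x⌋:ℤ):ℝ) = x := hxeq
      rw [if_pos rfl, tent_self hH, mul_one, hyeq]
    · rw [if_neg hxy]
      have htz : tent y H x = 0 := by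
        by_cases hy0 : Int.fract y = 0
        · have hyeq : ((⌊y⌋:ℤ):ℝ) = y := by
            have := Int.floor_add_fract y; rw [hy0] at this; linarith
          have hH1' : H = 1 := by rw [hHdef, hy0, lvl_zero]; norm_num
          apply tent_eq_zero hH
          have hfl : ⌊x⌋ ≠ ⌊y⌋ := by
            intro h; apply hxy; rw [← hxeq, ← hyeq, h]
          have h1 : (1:ℝ) ≤ |x - y| := by
            rw [← hxeq, ← hyeq]
            have h2 : (1:ℤ) ≤ |⌊x⌋ - ⌊y⌋| := Int.one_le_abs (by omega)
            calc (1:ℝ) ≤ |((⌊x⌋ - ⌊y⌋ : ℤ):ℝ)| := by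
                  rw [← Int.cast_abs]; exact_mod_cast h2
            _ = |((⌊x⌋:ℤ):ℝ) - ((⌊y⌋:ℤ):ℝ)| := by push_cast; ring_nf
          rw [hH1']; exact h1
        · obtain ⟨m, hm1, hmlvl, -, hyl, hyr⟩ := szd_struct hy hy0
          have hHm : H = ((2:ℝ)^m)⁻¹ := by rw [hHdef, hmlvl]
          have hyl' : ((⌊y⌋:ℤ):ℝ) ≤ y - H := by rw [hHm]; exact hyl
          have hyr' : y + H ≤ ((⌊y⌋:ℤ):ℝ) + 1 := by rw [hHm]; exact hyr
          apply tent_eq_zero hH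
          rcases le_or_gt ⌊x⌋ ⌊y⌋ with h | h
          · have hxley : x ≤ ((⌊y⌋:ℤ):ℝ) := by rw [← hxeq]; exact_mod_cast h
            rw [abs_of_nonpos (by linarith)]
            linarith
          · have hygex : ((⌊y⌋:ℤ):ℝ) + 1 ≤ x := by
              rw [← hxeq]
              have : (⌊y⌋ + 1 : ℤ) ≤ ⌊x⌋ := by omega
              exact_mod_cast this
            rw [abs_of_nonneg (by linarith)]
            linarith
      rw [htz, mul_zero]
  · -- x non-integer
    obtain ⟨n, hn1, hnlvl, ⟨p, hp, hpx⟩, hxl, hxr⟩ := szd_struct hx h0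
    rw [Qop_frac hx h0 hnlvl]
    set d := ((2:ℝ)^n)⁻¹ with hddef
    have hd : 0 < d := by rw [hddef]; positivity
    by_cases hxy : x = y
    · subst hxy
      rw [if_pos rfl]
      have hHd : H = d := by rw [hHdef, hnlvl, hddef]
      have ht1 : tent x H x = 1 := tent_self hH
      have ht2 : tent x H (x - d) = 0 := by
        apply tent_eq_zero hH
        have he : x - d - x = -d := by ring
        rw [he, abs_neg, abs_of_pos hd, hHd]
      have ht3 : tent x H (x + d) = 0 := by
        apply tent_eq_zero hH
        have he : x + d - x = d := by ring
        rw [he, abs_of_pos hd, hHd]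
      rw [ht1, ht2, ht3]
      norm_num
    · rw [if_neg hxy]
      have hpodd : ¬ Even p := by
        rcases hp with ⟨r, hr⟩
        rintro ⟨s, hs⟩
        omega
      have hbr : tent y H x - (tent y H (x - d) + tent y H (x + d))/2 = 0 := by
        rcases le_or_gt (lvl (Int.fract y)) n with hmn | hmn
        · -- lvl y ≤ n : kinks avoid the open interval
          obtain ⟨b, hb, a, ha, haE, c, hc, hcE⟩ :
              ∃ b : ℤ, y * 2^n = (b:ℝ) ∧ ∃ a : ℤ, (y - H)*2^n = (a:ℝ) ∧ Even a ∧
                ∃ c : ℤ, (y + H)*2^n = (c:ℝ) ∧ Even c := by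
            by_cases hy0 : Int.fract y = 0
            · have hyeq : ((⌊y⌋:ℤ):ℝ) = y := by
                have := Int.floor_add_fract y; rw [hy0] at this; linarith
              have hH1' : H = 1 := by rw [hHdef, hy0, lvl_zero]; norm_num
              have hEpow : Even ((2:ℤ)^n) := Int.even_pow.mpr ⟨even_two, by omega⟩
              refine ⟨⌊y⌋*2^n, ?_, (⌊y⌋-1)*2^n, ?_, hEpow.mul_left _,
                (⌊y⌋+1)*2^n, ?_, hEpow.mul_left _⟩
              · push_cast; rw [hyeq]
              · push_cast; rw [hH1']; linear_combination (-(2:ℝ)^n) * hyeq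
              · push_cast; rw [hH1']; linear_combination (-(2:ℝ)^n) * hyeq
            · obtain ⟨m, hm1, hmlvl, ⟨q, hq, hqy⟩, -, -⟩ := szd_struct hy hy0
              have hmn' : m ≤ n := by rw [hmlvl] at hmn; exact hmn
              have hHm : H = ((2:ℝ)^m)⁻¹ := by rw [hHdef, hmlvl]
              have hpow : (2:ℝ)^(n - m) * 2^m = 2^n := by rw [← pow_add]; congr 1; omega
              have hy2nR : y * 2^n = (q:ℝ) * 2^(n-m) := by
                rw [← hpow]; linear_combination (2:ℝ)^(n-m) * hqy
              have hH2n : H * 2^n = (2:ℝ)^(n - m) := by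
                rw [hHm, ← hpow]; field_simp
              have hEq1 : Even ((q:ℤ) - 1) := by rcases hq with ⟨r, hr⟩; exact ⟨r, by omega⟩
              have hEq2 : Even ((q:ℤ) + 1) := by rcases hq with ⟨r, hr⟩; exact ⟨r+1, by omega⟩
              refine ⟨q * 2^(n-m), ?_, (q-1) * 2^(n-m), ?_, hEq1.mul_right _,
                (q+1)*2^(n-m), ?_, hEq2.mul_right _⟩
              · push_cast; linear_combination hy2nR
              · push_cast; linear_combination hy2nR - hH2n
              · push_cast; linear_combination hy2nR + hH2n
          have hxa : y - H ≠ x := by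
            intro he
            have h1 : (a:ℝ) = (p:ℝ) := by rw [← ha, ← hpx, he]
            have hap : a = p := by exact_mod_cast h1
            rw [hap] at haE; exact hpodd haE
          have hxc : y + H ≠ x := by
            intro he
            have h1 : (c:ℝ) = (p:ℝ) := by rw [← hc, ← hpx, he]
            have hcp : c = p := by exact_mod_cast h1
            rw [hcp] at hcE; exact hpodd hcE
          have hxb : y ≠ x := fun h => hxy h.symm
          have r1 := not_mem_open hpx ha hxa
          have r2 := not_mem_open hpx hb hxb
          have r3 := not_mem_open hpx hc hxc
          apply tent_mid hH hd
          rcases r1 with h1l | h1r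
          · rcases r2 with h2l | h2r
            · rcases r3 with h3l | h3r
              · right; right; right; exact h3l
              · right; right; left; exact ⟨h2l, h3r⟩
            · right; left; exact ⟨h1l, h2r⟩
          · left; exact h1r
        · -- lvl y > n: tent vanishes at all three points
          have hy0 : Int.fract y ≠ 0 := by
            intro h; rw [h, lvl_zero] at hmn; omega
          obtain ⟨m, hm1, hmlvl, ⟨q, hq, hqy⟩, -, -⟩ := szd_struct hy hy0
          have hmn' : n < m := by rw [hmlvl] at hmn; exact hmn
          have hHm : H = ((2:ℝ)^m)⁻¹ := by rw [hHdef, hmlvl]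
          have hpow : (2:ℝ)^(m - n) * 2^n = 2^m := by rw [← pow_add]; congr 1; omega
          have hx2m : x * 2^m = (p:ℝ) * 2^(m-n) := by
            rw [← hpow]; linear_combination (2:ℝ)^(m-n) * hpx
          have hd2m : d * 2^m = (2:ℝ)^(m - n) := by
            rw [hddef, ← hpow]; field_simp
          have hEpow : Even ((2:ℤ)^(m-n)) := Int.even_pow.mpr ⟨even_two, by omega⟩
          obtain ⟨r, hr⟩ := hq
          obtain ⟨s0, hs0⟩ := hEpow.mul_left p
          obtain ⟨s1, hs1⟩ := hEpow.mul_left (p-1)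
          obtain ⟨s2, hs2⟩ := hEpow.mul_left (p+1)
          have e0 : (x - y) * 2^m = ((p * 2^(m-n) - q : ℤ):ℝ) := by
            push_cast; linear_combination hx2m - hqy
          have em : (x - d - y) * 2^m = (((p-1) * 2^(m-n) - q : ℤ):ℝ) := by
            push_cast; linear_combination hx2m - hd2m - hqy
          have ep : (x + d - y) * 2^m = (((p+1) * 2^(m-n) - q : ℤ):ℝ) := by
            push_cast; linear_combination hx2m + hd2m - hqy
          have t0 : tent y H x = 0 := by
            apply tent_eq_zero hH
            rw [hHm]
            exact dist_ge e0 (by omega)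
          have tm : tent y H (x - d) = 0 := by
            apply tent_eq_zero hH
            rw [hHm]
            exact dist_ge em (by omega)
          have tp : tent y H (x + d) = 0 := by
            apply tent_eq_zero hH
            rw [hHm]
            exact dist_ge ep (by omega)
          rw [t0, tm, tp]
          ring
      rw [hbr, mul_zero]

end QopTent
section Dense

lemma Qop_add (ρ f g : ℝ → ℝ) (x : ℝ) :
    Qop ρ (fun t => f t + g t) x = Qop ρ f x + Qop ρ g x := by
  simp only [Qop]
  split_ifs <;> ring

lemma Qop_zero (ρ : ℝ → ℝ) (x : ℝ) : Qop ρ (fun _ => (0:ℝ)) x = 0 := by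
  simp only [Qop]
  split_ifs <;> ring

lemma Qop_smul (ρ f : ℝ → ℝ) (c : ℝ) (x : ℝ) :
    Qop ρ (fun t => c * f t) x = c * Qop ρ f x := by
  simp only [Qop]
  split_ifs <;> ring

lemma Qop_sum {ι : Type*} [DecidableEq ι] (ρ : ℝ → ℝ) (s : Finset ι) (g : ι → ℝ → ℝ)
    (x : ℝ) : Qop ρ (fun t => ∑ y ∈ s, g y t) x = ∑ y ∈ s, Qop ρ (g y) x := by
  induction s using Finset.induction with
  | empty => simpa using Qop_zero ρ x
  | insert a s' hni ih =>
    rw [Finset.sum_insert hni]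
    simp only [Finset.sum_insert hni] at *
    rw [← ih]
    exact Qop_add ρ (g a) (fun t => ∑ y ∈ s', g y t) x

lemma Qop_dense {ρ : ℝ → ℝ} (hρpos : ∀ x, 0 < ρ x) (a : ℝ → ℝ) (ha : Memc0S a)
    (ε : ℝ) (hε : 0 < ε) :
    ∃ f : ℝ → ℝ, MemC0rho ρ f ∧ ∀ x : ℝ, |Qop ρ f x - a x| ≤ ε := by
  classical
  obtain ⟨ha0, hafin⟩ := ha
  set Fs := (hafin ε hε).toFinset with hFs
  have hFsSZD : ∀ y ∈ Fs, y ∈ SZD := by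
    intro y hy
    rw [hFs, Set.Finite.mem_toFinset, Set.mem_setOf_eq] at hy
    by_contra hyn
    rw [ha0 y hyn, abs_zero] at hy
    linarith
  set g : ℝ → ℝ → ℝ :=
    fun y t => (a y / ρ ((⌊y⌋:ℤ):ℝ)) * tent y (((2:ℝ)^(lvl (Int.fract y)))⁻¹) t with hg
  set f : ℝ → ℝ := fun t => ∑ y ∈ Fs, g y t with hf
  have hεle : ∀ y, (2:ℝ)^(lvl (Int.fract y)) ≥ 1 := fun y => one_le_pow₀ (by norm_num)
  refine ⟨f, ⟨?_, ?_, ?_⟩, ?_⟩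
  · -- continuity
    apply continuous_finset_sum
    intro y _
    exact continuous_const.mul (tent_continuous y _)
  · -- atTop
    have hrw : (fun x => f x * ρ x) = fun x => ∑ y ∈ Fs, (g y x * ρ x) := by
      funext x; rw [hf]; rw [Finset.sum_mul]
    rw [hrw]
    have : (0:ℝ) = ∑ y ∈ Fs, (0:ℝ) := by simp
    rw [this]
    apply tendsto_finset_sum
    intro y _
    apply Tendsto.congr' _ tendsto_const_nhds
    rw [Filter.eventuallyEq_iff_exists_mem]
    refine ⟨Set.Ici (y + 1), Filter.mem_atTop (y+1), ?_⟩
    intro t ht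
    have htz : tent y (((2:ℝ)^(lvl (Int.fract y)))⁻¹) t = 0 := by
      apply tent_eq_zero (by positivity)
      rw [abs_of_nonneg (by simp at ht; linarith)]
      have h1 : ((2:ℝ)^(lvl (Int.fract y)))⁻¹ ≤ 1 := inv_le_one_of_one_le₀ (hεle y)
      simp at ht
      linarith
    rw [hg]
    simp only []
    rw [htz]
    ring
  · -- atBot
    have hrw : (fun x => f x * ρ x) = fun x => ∑ y ∈ Fs, (g y x * ρ x) := by
      funext x; rw [hf]; rw [Finset.sum_mul]
    rw [hrw]
    have : (0:ℝ) = ∑ y ∈ Fs, (0:ℝ) := by simp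
    rw [this]
    apply tendsto_finset_sum
    intro y _
    apply Tendsto.congr' _ tendsto_const_nhds
    rw [Filter.eventuallyEq_iff_exists_mem]
    refine ⟨Set.Iic (y - 1), Filter.mem_atBot (y-1), ?_⟩
    intro t ht
    have htz : tent y (((2:ℝ)^(lvl (Int.fract y)))⁻¹) t = 0 := by
      apply tent_eq_zero (by positivity)
      simp only [Set.mem_Iic] at ht
      rw [abs_of_nonpos (by linarith)]
      have h1 : ((2:ℝ)^(lvl (Int.fract y)))⁻¹ ≤ 1 := inv_le_one_of_one_le₀ (hεle y)
      linarith
    rw [hg]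
    simp only []
    rw [htz]
    ring
  · -- approximation
    intro x
    have hQf : Qop ρ f x = ∑ y ∈ Fs, Qop ρ (g y) x := Qop_sum ρ Fs g x
    have hterm : ∀ y ∈ Fs, Qop ρ (g y) x = if x = y then a y else 0 := by
      intro y hy
      have h1 : Qop ρ (g y) x
          = (a y / ρ ((⌊y⌋:ℤ):ℝ)) * Qop ρ (tent y (((2:ℝ)^(lvl (Int.fract y)))⁻¹)) x :=
        Qop_smul ρ _ _ x
      rw [h1, Qop_tent hρpos (hFsSZD y hy) x]
      split_ifs with hxy
      · rw [div_mul_cancel₀ _ (hρpos _).ne']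
      · ring
    rw [hQf, Finset.sum_congr rfl hterm, Finset.sum_ite_eq]
    by_cases hxF : x ∈ Fs
    · rw [if_pos hxF, sub_self, abs_zero]
      linarith
    · rw [if_neg hxF, zero_sub, abs_neg]
      have : ¬ ε ≤ |a x| := by
        rw [hFs, Set.Finite.mem_toFinset, Set.mem_setOf_eq] at hxF
        exact hxF
      linarith

end Dense
/-- for `ρ` admissible with `ρ(x) = ρ(⌊x⌋)`, the operator `Q` is
well defined from `C₀^ρ(ℝ)` into `c₀(ℤ+D̃)`, linear, continuous with `‖Q(f)‖ ≤ 2‖f‖^ρ_∞`,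
has dense range, and intertwines the translation `T₁` with `B_w`; in particular `T₁` is
quasiconjugate to `B_w`. -/
theorem Qop_quasiconjugates_translation_to_shift
    (ρ : ℝ → ℝ) (hρ : Admissible ρ)
    (hfloor : ∀ x : ℝ, ρ x = ρ ((⌊x⌋ : ℤ) : ℝ)) :
    (∀ f : ℝ → ℝ, MemC0rho ρ f → Memc0S (Qop ρ f)) ∧
    (∀ f g : ℝ → ℝ, ∀ c : ℝ,
        Qop ρ (fun y => f y + c * g y) = fun x => Qop ρ f x + c * Qop ρ g x) ∧
    (∀ f : ℝ → ℝ, MemC0rho ρ f → ∀ x : ℝ, |Qop ρ f x| ≤ 2 * ⨆ t : ℝ, |f t| * ρ t) ∧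
    (∀ a : ℝ → ℝ, Memc0S a → ∀ ε : ℝ, 0 < ε →
        ∃ f : ℝ → ℝ, MemC0rho ρ f ∧ ∀ x : ℝ, |Qop ρ f x - a x| ≤ ε) ∧
    (∀ f : ℝ → ℝ, Qop ρ (fun y => f (y + 1)) = BwOpS ρ (Qop ρ f)) := by
  obtain ⟨-, hρpos, -⟩ := hρ
  exact ⟨fun f hf => Qop_c0 hρpos hfloor hf,
    fun f g c => Qop_linear ρ f g c,
    fun f hf x => Qop_norm_bound hρpos hfloor hf x,
    fun a ha ε hε => Qop_dense hρpos a ha ε hε,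
    fun f => Qop_shift ρ hρpos f⟩
end

section
/- Let ρ be an admissible weight function on ℝ such that lim_{x→±∞} ρ(x) = 0 (equivalently, by known characterizations, the translation semigroup is mixing on C₀^ρ(ℝ), equivalently chaotic on C₀^ρ(ℝ)). Then the translation semigroup (T_t)_{t≥0} is frequently hypercyclic on C₀^ρ(ℝ). -/
open Filter MeasureTheory
open scoped ENNReal

/-- The lower density of a measurable set `M ⊆ [0,∞)`:
`liminf_{N→∞} μ(M ∩ [0,N])/N`. -/
noncomputable def ldensR (M : Set ℝ) : ℝ :=
  atTop.liminf fun N : ℝ => (volume (M ∩ Set.Icc 0 N)).toReal / N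

/-- Frequent hypercyclicity of the translation semigroup `(T_t f)(x) = f(x+t)` on `C₀^ρ(ℝ)`:
there is `f` in the space such that for every `g` in the space and every `ε > 0`, the set
of times `t ≥ 0` with `‖T_t f - g‖^ρ_∞ ≤ ε` has positive lower density. -/
def FHTransC0 (ρ : ℝ → ℝ) : Prop :=
  ∃ f : ℝ → ℝ, MemC0rho ρ f ∧ ∀ g : ℝ → ℝ, MemC0rho ρ g → ∀ ε : ℝ, 0 < ε →
    0 < ldensR {t : ℝ | 0 ≤ t ∧ ∀ x : ℝ, |f (x + t) - g x| * ρ x ≤ ε}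

namespace FHC

/-- The "type" of block `k`: 2-adic valuation. -/
def nu (k : ℕ) : ℕ := padicValNat 2 k

lemma nu_eq (n m : ℕ) : nu (2^n * (2*m+1)) = n := by
  unfold nu
  have h1 : (2*m+1) ≠ 0 := by omega
  have h2 : (2:ℕ)^n ≠ 0 := by positivity
  rw [padicValNat.mul h2 h1, padicValNat.prime_pow,
    padicValNat.eq_zero_of_not_dvd (by omega)]
  omega

lemma exists_block (n w : ℕ) : ∃ k, w < k ∧ k ≤ w + 2^(n+2) ∧ nu k = n := by
  refine ⟨2^n * (2*(w / 2^(n+1) + 1)+1), ?_, ?_, nu_eq _ _⟩ <;>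
  · have h0 := Nat.div_add_mod w (2^(n+1))
    have h2 : w % 2^(n+1) < 2^(n+1) := Nat.mod_lt _ (by positivity)
    have h3 : 2^n * (2*(w / 2^(n+1) + 1)+1) = 2^(n+1) * (w / 2^(n+1)) + 3 * 2^n := by ring
    have h4 : 2^(n+2) = 4 * 2^n := by ring
    have h5 : 2^(n+1) = 2 * 2^n := by ring
    have h6 : 0 < 2^n := Nat.pow_pos (by norm_num)
    omega

end FHC

namespace FHC

/-- All data and estimates needed for the construction. -/
structure Setup (ρ : ℝ → ℝ) where
  C : ℝ
  G : ℕ → ℝ → ℝ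
  R : ℕ → ℕ
  b : ℕ → ℝ
  d : ℕ → ℝ
  del : ℕ → ℝ
  L : ℕ → ℕ
  hρpos : ∀ x, 0 < ρ x
  hC1 : 1 ≤ C
  hρC : ∀ x, ρ x ≤ C
  hGcont : ∀ n, Continuous (G n)
  hGsupp : ∀ n x, (R n : ℝ) ≤ |x| → G n x = 0
  hR1 : ∀ n, 1 ≤ R n
  hRmono : Monotone R
  hb0 : ∀ n, 0 ≤ b n
  hbmono : Monotone b
  hGb : ∀ n x, |G n x| ≤ b n
  hdR : ∀ n, (R n : ℝ) + 2 ≤ d n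
  hdmono : Monotone d
  hρd : ∀ n x, d n ≤ |x| → ρ x ≤ 1 / (2*(n+1)*(1 + b n))
  hL : ∀ n, (R n : ℝ) + 3 + d n ≤ (L n : ℝ)
  hL2 : ∀ n, 2 ≤ L n
  hLmono : Monotone L
  hδpos : ∀ n, 0 < del n
  hδ1 : ∀ n, del n ≤ 1
  hδmod : ∀ n τ x, 0 ≤ τ → τ ≤ del n → |G n (x+τ) - G n x| ≤ 1/(2*(n+1)*(1+C))

namespace Setup

variable {ρ : ℝ → ℝ} (S : Setup ρ)

def valid (k j : ℕ) : Prop := 1 ≤ k ∧ 4 * S.L (nu k) ≤ 4^k ∧ j < 4^k / S.L (nu k)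

def pos (k j : ℕ) : ℕ := 4^k + j * S.L (nu k)

open Classical in
noncomputable def term (p : ℕ × ℕ) (y : ℝ) : ℝ :=
  if S.valid p.1 p.2 then S.G (nu p.1) (y - S.pos p.1 p.2) else 0

noncomputable def F (y : ℝ) : ℝ := ∑' p : ℕ × ℕ, S.term p y

lemma Lpos (n : ℕ) : 0 < S.L n := lt_of_lt_of_le (by norm_num) (S.hL2 n)

lemma pos_lb (k j : ℕ) : 4^k ≤ S.pos k j := Nat.le_add_right _ _

lemma pos_ub {k j : ℕ} (h : S.valid k j) : S.pos k j + S.L (nu k) ≤ 2 * 4^k := by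
  obtain ⟨-, -, hj⟩ := h
  have : (j+1) * S.L (nu k) ≤ 4^k := by
    rw [← Nat.le_div_iff_mul_le (S.Lpos _)]; omega
  unfold pos; nlinarith

lemma d0 (n : ℕ) : 0 ≤ S.d n := le_trans (by positivity) (S.hdR n)

/-- Separation of distinct placement centers. -/
lemma sep {k j k' j' : ℕ} (hv : S.valid k j) (hv' : S.valid k' j')
    (hne : (k, j) ≠ (k', j')) :
    (S.L (max (nu k) (nu k')) : ℝ) ≤ |(S.pos k j : ℝ) - S.pos k' j'| := by
  have key : ∀ a b a' b' : ℕ, S.valid a b → S.valid a' b' → a < a' →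
      S.pos a b + S.L (nu a) + S.L (nu a') ≤ S.pos a' b' := by
    intro a b a' b' hv hv' hlt
    have h1 : S.pos a b + S.L (nu a) ≤ 2 * 4^a := S.pos_ub hv
    have h2 : 4 * S.L (nu a') ≤ 4^a' := hv'.2.1
    have h3 : 4^(a+1) ≤ 4^a' := Nat.pow_le_pow_right (by norm_num) hlt
    have h4 : 4^(a+1) = 4 * 4^a := by ring
    have h5 : 4^a' ≤ S.pos a' b' := S.pos_lb a' b'
    omega
  rcases lt_trichotomy k k' with hlt | heq | hgt
  · have := key k j k' j' hv hv' hlt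
    have hmax : S.L (max (nu k) (nu k')) ≤ S.L (nu k) + S.L (nu k') := by
      rcases max_cases (nu k) (nu k') with ⟨h, -⟩ | ⟨h, -⟩ <;> rw [h] <;> omega
    have : (S.pos k j : ℝ) + S.L (max (nu k) (nu k')) ≤ S.pos k' j' := by
      exact_mod_cast le_trans (by omega : S.pos k j + S.L (max (nu k) (nu k')) ≤
        S.pos k j + S.L (nu k) + S.L (nu k')) this
    rw [abs_sub_comm, abs_of_nonneg (by linarith)]; linarith
  · subst heq
    have hj : j ≠ j' := by simpa using hne
    simp only [max_self]
    have heqd : (S.pos k j : ℝ) - S.pos k j' = ((j:ℝ) - j') * S.L (nu k) := by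
      unfold pos; push_cast; ring
    have hL0 : (0:ℝ) < (S.L (nu k) : ℝ) := by exact_mod_cast S.Lpos (nu k)
    have h1 : (1:ℝ) ≤ |(j:ℝ) - j'| := by
      rcases hj.lt_or_gt with h | h
      · have hle : (j:ℝ) + 1 ≤ j' := by exact_mod_cast h
        rw [abs_sub_comm, abs_of_nonneg (by linarith)]; linarith
      · have hle : (j':ℝ) + 1 ≤ j := by exact_mod_cast h
        rw [abs_of_nonneg (by linarith)]; linarith
    rw [heqd, abs_mul, abs_of_nonneg hL0.le]
    nlinarith
  · have := key k' j' k j hv' hv hgt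
    have hmax : S.L (max (nu k) (nu k')) ≤ S.L (nu k) + S.L (nu k') := by
      rcases max_cases (nu k) (nu k') with ⟨h, -⟩ | ⟨h, -⟩ <;> rw [h] <;> omega
    have : (S.pos k' j' : ℝ) + S.L (max (nu k) (nu k')) ≤ S.pos k j := by
      exact_mod_cast le_trans (by omega : S.pos k' j' + S.L (max (nu k) (nu k')) ≤
        S.pos k' j' + S.L (nu k') + S.L (nu k)) this
    rw [abs_of_nonneg (by linarith)]; linarith

end Setup
end FHC

namespace FHC
namespace Setup

variable {ρ : ℝ → ℝ} (S : Setup ρ)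

lemma cast_mono {f : ℕ → ℕ} (hf : Monotone f) {a b : ℕ} (h : a ≤ b) :
    (f a : ℝ) ≤ f b := by exact_mod_cast hf h

/-- If `y` is within `R+1` of the center of a valid placement `p`, then every other
placement's bump vanishes on the ball of radius 1 around `y`. -/
lemma isolated {p q : ℕ × ℕ} (hne : q ≠ p) (hvp : S.valid p.1 p.2) (hvq : S.valid q.1 q.2)
    {y z : ℝ} (hy : |y - (S.pos p.1 p.2 : ℝ)| ≤ (S.R (nu p.1) : ℝ) + 1) (hz : |z - y| ≤ 1) :
    S.G (nu q.1) (z - S.pos q.1 q.2) = 0 := by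
  set n := nu p.1
  set m := nu q.1
  have hsep : (S.L (max n m) : ℝ) ≤ |(S.pos p.1 p.2 : ℝ) - S.pos q.1 q.2| := by
    have hne' : (p.1, p.2) ≠ (q.1, q.2) := by
      intro h
      apply hne
      have h1 : p.1 = q.1 := congrArg Prod.fst h
      have h2 : p.2 = q.2 := congrArg Prod.snd h
      exact Prod.ext h1.symm h2.symm
    exact S.sep hvp hvq hne'
  have hL := S.hL (max n m)
  have hRn : (S.R n : ℝ) ≤ S.R (max n m) := cast_mono S.hRmono (le_max_left _ _)
  have hRm : (S.R m : ℝ) ≤ S.R (max n m) := cast_mono S.hRmono (le_max_right _ _)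
  have hdmax := S.hdR (max n m)
  apply S.hGsupp
  have h1 : |(S.pos p.1 p.2 : ℝ) - S.pos q.1 q.2| ≤ |y - S.pos p.1 p.2| + |z - y|
      + |z - (S.pos q.1 q.2 : ℝ)| := by
    have := abs_sub_le ((S.pos p.1 p.2 : ℝ)) y (S.pos q.1 q.2)
    have h2 := abs_sub_le y z ((S.pos q.1 q.2 : ℝ))
    rw [abs_sub_comm ((S.pos p.1 p.2:ℝ)) y] at this
    rw [abs_sub_comm y z] at h2
    linarith
  linarith

lemma term_continuous (p : ℕ × ℕ) : Continuous (fun y => S.term p y) := by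
  unfold term
  split
  · exact (S.hGcont _).comp (continuous_id.sub continuous_const)
  · exact continuous_const

lemma term_eq_zero_of_far {p : ℕ × ℕ} {y : ℝ}
    (h : S.valid p.1 p.2 → (S.R (nu p.1) : ℝ) ≤ |y - S.pos p.1 p.2|) : S.term p y = 0 := by
  unfold term; split
  · next hv => exact S.hGsupp _ _ (h hv)
  · rfl

lemma term_ne_zero {p : ℕ × ℕ} {y : ℝ} (h : S.term p y ≠ 0) :
    S.valid p.1 p.2 ∧ |y - (S.pos p.1 p.2 : ℝ)| < S.R (nu p.1) ∧
      S.term p y = S.G (nu p.1) (y - S.pos p.1 p.2) := by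
  unfold term at h ⊢
  split at h
  · next hv =>
    refine ⟨hv, ?_, by rw [if_pos hv]⟩
    by_contra hcon
    exact h (S.hGsupp _ _ (not_lt.1 hcon))
  · exact absurd rfl h

/-- Evaluation of `F`. -/
lemma F_cases (y : ℝ) : (S.F y = 0 ∧ ∀ p, S.term p y = 0) ∨
    ∃ p : ℕ × ℕ, S.valid p.1 p.2 ∧ |y - (S.pos p.1 p.2 : ℝ)| < S.R (nu p.1) ∧
      S.F y = S.G (nu p.1) (y - S.pos p.1 p.2) := by
  by_cases hall : ∀ p, S.term p y = 0
  · left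
    refine ⟨?_, hall⟩
    have : S.F y = ∑' _ : ℕ × ℕ, (0:ℝ) := by
      unfold F; exact tsum_congr fun p => hall p
    simpa using this
  · right
    push_neg at hall
    obtain ⟨p, hp⟩ := hall
    obtain ⟨hvp, hnear, heq⟩ := S.term_ne_zero hp
    refine ⟨p, hvp, hnear, ?_⟩
    rw [← heq]
    apply tsum_eq_single
    intro q hq
    unfold term
    split
    · next hvq => exact S.isolated hq hvp hvq (le_trans hnear.le (by linarith)) (by simp)
    · rfl

end Setup
end FHC
namespace FHC
namespace Setup

variable {ρ : ℝ → ℝ} (S : Setup ρ)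

lemma F_continuous : Continuous S.F := by
  rw [continuous_iff_continuousAt]
  intro y
  by_cases hex : ∃ p : ℕ × ℕ, S.valid p.1 p.2 ∧ |y - (S.pos p.1 p.2 : ℝ)| ≤ S.R (nu p.1) + 1
  · obtain ⟨p, hvp, hy⟩ := hex
    have hloc : ∀ z, |z - y| ≤ 1 → S.F z = S.term p z := by
      intro z hz
      apply tsum_eq_single
      intro q hq
      unfold term
      split
      · next hvq => exact S.isolated hq hvp hvq hy hz
      · rfl
    have hev : S.F =ᶠ[nhds y] (fun z => S.term p z) := by
      filter_upwards [Metric.ball_mem_nhds y one_pos] with z hz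
      exact hloc z (le_of_lt (by simpa [Real.dist_eq] using hz))
    exact (continuousAt_congr hev).2 (S.term_continuous p).continuousAt
  · push_neg at hex
    have hloc : ∀ z, |z - y| ≤ 1 → S.F z = 0 := by
      intro z hz
      have : ∀ q : ℕ × ℕ, S.term q z = 0 := by
        intro q
        unfold term
        split
        · next hvq =>
          apply S.hGsupp
          by_contra hcon
          push_neg at hcon
          have h2 : |y - (S.pos q.1 q.2 : ℝ)| ≤ S.R (nu q.1) + 1 := by
            have := abs_sub_le y z ((S.pos q.1 q.2 : ℝ))
            rw [abs_sub_comm y z] at this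
            linarith
          exact absurd h2 (not_le.2 (hex q hvq))
        · rfl
      unfold F
      have : S.F z = ∑' _ : ℕ × ℕ, (0:ℝ) := tsum_congr fun q => this q
      exact this.trans tsum_zero
    have hev : S.F =ᶠ[nhds y] (fun _ => (0:ℝ)) := by
      filter_upwards [Metric.ball_mem_nhds y one_pos] with z hz
      exact hloc z (le_of_lt (by simpa [Real.dist_eq] using hz))
    exact (continuousAt_congr hev).2 continuousAt_const

lemma F_zero_of_nonpos {y : ℝ} (hy : y ≤ 0) : S.F y = 0 := by
  rcases S.F_cases y with ⟨h, -⟩ | ⟨p, hvp, hnear, -⟩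
  · exact h
  · exfalso
    have h4 : (4:ℕ)^p.1 ≤ S.pos p.1 p.2 := S.pos_lb p.1 p.2
    have hL4 : 4 * S.L (nu p.1) ≤ 4^p.1 := hvp.2.1
    have hRL : (S.R (nu p.1) : ℝ) + 3 + S.d (nu p.1) ≤ S.L (nu p.1) := S.hL (nu p.1)
    have hd0 := S.d0 (nu p.1)
    have hcast : (S.R (nu p.1) : ℝ) ≤ S.L (nu p.1) := by linarith
    have hpos : ((S.pos p.1 p.2 : ℕ) : ℝ) ≥ 4 * (S.L (nu p.1) : ℝ) := by
      exact_mod_cast le_trans hL4 h4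
    have := abs_lt.1 hnear
    have hL0 : (0:ℝ) < S.L (nu p.1) := by exact_mod_cast S.Lpos (nu p.1)
    linarith

end Setup
end FHC
namespace FHC
namespace Setup

variable {ρ : ℝ → ℝ} (S : Setup ρ)

set_option maxHeartbeats 1000000 in
/-- The central estimate: near a valid placement time of type `n`, the translate of `F`
is uniformly (weighted) close to `G n`. -/
lemma main_est (n k j : ℕ) (hv : S.valid k j) (hk : nu k = n) (t : ℝ)
    (ht1 : (S.pos k j : ℝ) ≤ t) (ht2 : t ≤ (S.pos k j : ℝ) + S.del n) (x : ℝ) :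
    |S.F (x + t) - S.G n x| * ρ x ≤ 1/((n:ℝ)+1) := by
  set p : ℕ × ℕ := (k, j) with hp
  set s : ℝ := (S.pos k j : ℝ) with hs
  set τ : ℝ := t - s with hτdef
  have hτ0 : 0 ≤ τ := by simp [hτdef]; linarith
  have hτδ : τ ≤ S.del n := by simp [hτdef]; linarith
  have hτ1 : τ ≤ 1 := le_trans hτδ (S.hδ1 n)
  have hρx := S.hρpos x
  have hρCx := S.hρC x
  have hvp : S.valid p.1 p.2 := hv
  have hnup : nu p.1 = n := hk
  by_cases hx : |x| ≤ (S.R n : ℝ) + 1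
  · -- near the core: `F (x+t)` is exactly the translated bump
    have hF : S.F (x + t) = S.G n (x + τ) := by
      have h1 : S.F (x + t) = S.term p (x + t) := by
        apply tsum_eq_single
        intro q hq
        unfold term
        split
        · next hvq =>
          exact S.isolated hq hvp hvq (y := x + s)
            (by rw [hnup]; simpa [hs, hp, abs_of_nonneg] using hx)
            (by rw [show x + t - (x + s) = τ by ring, abs_of_nonneg hτ0]; exact hτ1)
        · rfl
      rw [h1]
      unfold term
      rw [if_pos hvp, hnup]
      congr 1
      simp only [hτdef, hs, hp]; ring
    rw [hF]
    have hA : (0:ℝ) < 2*((n:ℝ)+1)*(1+S.C) := by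
      nlinarith [S.hC1, Nat.cast_nonneg (α := ℝ) n]
    have h2 := S.hδmod n τ x hτ0 hτδ
    have h3 : |S.G n (x + τ) - S.G n x| * ρ x ≤ (1/(2*((n:ℝ)+1)*(1+S.C))) * S.C :=
      mul_le_mul h2 hρCx hρx.le (one_div_pos.2 hA).le
    refine le_trans h3 ?_
    rw [div_mul_eq_mul_div, one_mul, div_le_div_iff₀ hA (by positivity)]
    nlinarith [S.hC1, Nat.cast_nonneg (α := ℝ) n]
  · -- far from the core: `G n x = 0` and `F (x+t)` is exponentially-weighted small
    push_neg at hx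
    have hGx : S.G n x = 0 := S.hGsupp n x (by linarith)
    rw [hGx, sub_zero]
    rcases S.F_cases (x + t) with ⟨h0, -⟩ | ⟨q, hvq, hnear, heq⟩
    · rw [h0]; simp; positivity
    · set m := nu q.1 with hm
      by_cases hqp : q = p
      · exfalso
        rw [hqp] at hnear
        have heq2 : |x + t - (S.pos p.1 p.2 : ℝ)| = |x + τ| := by
          congr 1; simp [hτdef, hs, hp]; ring
        have hmn : S.R m = S.R n := by rw [hm, hqp, hnup]
        rw [heq2, hmn] at hnear
        have : |x| ≤ |x + τ| + τ := by
          have := abs_sub_abs_le_abs_sub x (x + τ)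
          have h2 : |x - (x+τ)| = τ := by rw [show x - (x+τ) = -τ by ring, abs_neg,
            abs_of_nonneg hτ0]
          linarith
        linarith
      · set M := max n m with hM
        have hsep : (S.L M : ℝ) ≤ |s - (S.pos q.1 q.2 : ℝ)| := by
          have := S.sep hvp hvq (by
            intro hcon
            apply hqp
            have h1 : p.1 = q.1 := congrArg Prod.fst hcon
            have h2 : p.2 = q.2 := congrArg Prod.snd hcon
            exact Prod.ext h1.symm h2.symm)
          rw [hnup] at this
          exact this
        have hLM := S.hL M
        have hRmM : (S.R m : ℝ) ≤ S.R M := cast_mono S.hRmono (le_max_right _ _)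
        have hdM := S.hdR M
        have hdmM : S.d m ≤ S.d M := S.hdmono (le_max_right _ _)
        have hbmM : S.b m ≤ S.b M := S.hbmono (le_max_right _ _)
        have hnM : (n:ℝ) ≤ (M:ℕ) := by exact_mod_cast le_max_left n m
        -- |x| is at least d M
        have hxd : S.d M ≤ |x| := by
          have h1 : |s - (S.pos q.1 q.2:ℝ)| ≤ |x + t - (S.pos q.1 q.2:ℝ)| + τ + |x| := by
            have e1 := abs_sub_le s (x + t) ((S.pos q.1 q.2 : ℝ))
            have e2 : |s - (x + t)| ≤ τ + |x| := by
              rw [show s - (x + t) = -τ - x by rw [hτdef]; ring]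
              calc |(-τ) - x| ≤ |(-τ)| + |x| := abs_sub _ _
                _ = τ + |x| := by rw [abs_neg, abs_of_nonneg hτ0]
            linarith
          linarith
        have hρxd := S.hρd M x hxd
        have hFb : |S.F (x + t)| ≤ S.b M := by
          rw [heq]
          exact le_trans (S.hGb m _) hbmM
        clear_value m M
        have h5 : |S.F (x+t)| * ρ x ≤ S.b M * (1/(2*(((M:ℕ):ℝ)+1)*(1+S.b M))) :=
          mul_le_mul hFb hρxd hρx.le (S.hb0 M)
        refine le_trans h5 ?_
        have hpos : (0:ℝ) < 2*(((M:ℕ):ℝ)+1)*(1+S.b M) := by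
          nlinarith [S.hb0 M, Nat.cast_nonneg (α := ℝ) (M:ℕ)]
        rw [mul_one_div, div_le_div_iff₀ hpos (by positivity)]
        have e1 : S.b M * ((n:ℝ)+1) ≤ S.b M * (((M:ℕ):ℝ)+1) :=
          mul_le_mul_of_nonneg_left (by linarith) (S.hb0 M)
        have e2 : S.b M * (((M:ℕ):ℝ)+1) ≤ 1 * (2*(((M:ℕ):ℝ)+1)*(1+S.b M)) := by
          nlinarith [S.hb0 M, Nat.cast_nonneg (α := ℝ) (M:ℕ)]
        linarith

end Setup
end FHC
namespace FHC
namespace Setup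

variable {ρ : ℝ → ℝ} (S : Setup ρ)

lemma F_mem (htop : Tendsto ρ atTop (nhds 0)) : MemC0rho ρ S.F := by
  refine ⟨S.F_continuous, ?_, ?_⟩
  · -- at +∞
    rw [NormedAddCommGroup.tendsto_nhds_zero]
    intro ε hε
    obtain ⟨n₀, hn₀⟩ := exists_nat_one_div_lt hε
    have hεe : (0:ℝ) < ε / (1 + S.b n₀) := by
      have := S.hb0 n₀; positivity
    have hev : ∀ᶠ y in atTop, ρ y < ε / (1 + S.b n₀) := htop.eventually (gt_mem_nhds hεe)
    filter_upwards [hev, eventually_ge_atTop (0:ℝ)] with y hρy hy0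
    have hρ0 := S.hρpos y
    rw [Real.norm_eq_abs, abs_mul, abs_of_pos hρ0]
    rcases S.F_cases y with ⟨h0, -⟩ | ⟨p, hvp, hnear, heq⟩
    · rw [h0]; simpa using hε
    · set m := nu p.1 with hm
      have hFb : |S.F y| ≤ S.b m := by rw [heq]; exact S.hGb m _
      by_cases hmn : m ≤ n₀
      · have h1 : |S.F y| * ρ y ≤ S.b n₀ * ρ y :=
          mul_le_mul_of_nonneg_right (le_trans hFb (S.hbmono hmn)) hρ0.le
        have h2 : S.b n₀ * ρ y ≤ S.b n₀ * (ε / (1 + S.b n₀)) :=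
          mul_le_mul_of_nonneg_left hρy.le (S.hb0 n₀)
        have h3 : S.b n₀ * (ε / (1 + S.b n₀)) < ε := by
          rw [mul_div_assoc']
          rw [div_lt_iff₀ (by nlinarith [S.hb0 n₀])]
          nlinarith [S.hb0 n₀]
        linarith
      · push_neg at hmn
        -- y is far out relative to type m, so ρ y is small
        have hyd : S.d m ≤ |y| := by
          have h4 : (4:ℝ) * S.L m ≤ ((S.pos p.1 p.2 : ℕ) : ℝ) := by
            exact_mod_cast le_trans hvp.2.1 (S.pos_lb p.1 p.2)
          have hLm := S.hL m
          have hdm := S.hdR m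
          have hd0 := S.d0 m
          have habs := abs_lt.1 hnear
          rw [abs_of_nonneg hy0]
          have hR0 : (0:ℝ) ≤ S.R m := Nat.cast_nonneg _
          linarith
        have hρyd := S.hρd m y hyd
        have h5 : |S.F y| * ρ y ≤ S.b m * (1/(2*((m:ℝ)+1)*(1+S.b m))) :=
          mul_le_mul hFb hρyd hρ0.le (S.hb0 m)
        have h6 : S.b m * (1/(2*((m:ℝ)+1)*(1+S.b m))) < ε := by
          have hb := S.hb0 m
          have hmr : (n₀:ℝ) + 1 ≤ (m:ℝ) := by exact_mod_cast hmn
          have hpos : (0:ℝ) < 2*((m:ℝ)+1)*(1+S.b m) := by nlinarith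
          rw [mul_one_div]
          have : S.b m / (2*((m:ℝ)+1)*(1+S.b m)) ≤ 1/((n₀:ℝ)+1) := by
            rw [div_le_div_iff₀ hpos (by positivity)]
            nlinarith
          linarith
        linarith
  · -- at -∞ : F vanishes identically
    apply Tendsto.congr' _ tendsto_const_nhds
    filter_upwards [eventually_le_atBot (0:ℝ)] with y hy
    rw [S.F_zero_of_nonpos hy, zero_mul]

end Setup
end FHC
namespace FHC
namespace Setup

variable {ρ : ℝ → ℝ} (S : Setup ρ)

lemma pos_mono {k i j : ℕ} (hij : i < j) : S.pos k i + S.L (nu k) ≤ S.pos k j := by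
  unfold pos
  have : (i + 1) * S.L (nu k) ≤ j * S.L (nu k) := Nat.mul_le_mul_right _ hij
  nlinarith

set_option maxHeartbeats 1000000 in
lemma ldens_pos (n : ℕ) (T : Set ℝ)
    (hT : ∀ k j, S.valid k j → nu k = n →
      Set.Icc ((S.pos k j : ℝ)) ((S.pos k j : ℝ) + S.del n) ⊆ T) :
    0 < ldensR T := by
  classical
  set E : ℕ := 2^(n+2) + 4 with hE
  set c : ℝ := S.del n / (2 * S.L n * 4^E) with hc
  have hL0 : (0:ℝ) < S.L n := by exact_mod_cast S.Lpos n
  have hδ0 := S.hδpos n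
  have hδ1 := S.hδ1 n
  have hc0 : 0 < c := by positivity
  set K₀ : ℕ := 2^(n+2) + S.L n + 7 with hK₀
  have hmain : ∀ᶠ N in atTop, c ≤ (volume (T ∩ Set.Icc 0 N)).toReal / N := by
    filter_upwards [eventually_ge_atTop ((4:ℝ)^(K₀+2)), eventually_ge_atTop (1:ℝ)]
      with N hN4 hN1
    have hN0 : (0:ℝ) < N := by linarith
    set K : ℕ := Nat.log 4 ⌊N⌋₊ with hKdef
    have hfl : 4^(K₀+2) ≤ ⌊N⌋₊ := by
      apply Nat.le_floor
      push_cast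
      exact hN4
    have hflne : ⌊N⌋₊ ≠ 0 := by
      intro h
      rw [h] at hfl
      have h0 : 0 < 4^(K₀+2) := Nat.pow_pos (by norm_num)
      omega
    have hK : K₀ + 2 ≤ K := by
      rw [hKdef, ← Nat.log_pow (show 1 < 4 by norm_num) (K₀+2)]
      exact Nat.log_mono_right hfl
    have hKN : ((4:ℝ))^K ≤ N := by
      have h1 : (4:ℕ)^K ≤ ⌊N⌋₊ := Nat.pow_log_le_self 4 hflne
      calc ((4:ℝ))^K = ((4^K : ℕ) : ℝ) := by push_cast; ring
        _ ≤ (⌊N⌋₊ : ℝ) := by exact_mod_cast h1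
        _ ≤ N := Nat.floor_le hN0.le
    have hNK : N < (4:ℝ)^(K+2) := by
      have h1 : ⌊N⌋₊ < 4^(K+1) := Nat.lt_pow_succ_log_self (by norm_num) _
      have h2 : (4:ℕ)^(K+1) + 1 ≤ 4^(K+2) := by
        have : (4:ℕ)^(K+1) + 4^(K+1) ≤ 4^(K+2) := by
          have : (4:ℕ)^(K+2) = 4 * 4^(K+1) := by ring
          omega
        have : 1 ≤ (4:ℕ)^(K+1) := Nat.one_le_pow _ _ (by norm_num)
        omega
      calc N < (⌊N⌋₊ : ℝ) + 1 := Nat.lt_floor_add_one N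
        _ ≤ ((4^(K+1) : ℕ) : ℝ) := by exact_mod_cast h1
        _ ≤ ((4^(K+2) : ℕ) : ℝ) := by
            exact_mod_cast Nat.pow_le_pow_right (show 1 ≤ 4 by norm_num)
              (show K+1 ≤ K+2 by omega)
        _ = (4:ℝ)^(K+2) := by push_cast; ring
    -- choose a block of type n just below K
    obtain ⟨k, hk1, hk2, hk3⟩ := exists_block n (K - 2^(n+2) - 2)
    have hkK : k + 2 ≤ K := by omega
    have hkL : S.L n + 5 ≤ k := by omega
    have hKk : K + 2 ≤ k + E := by omega
    have hact : 4 * S.L n ≤ 4^k := by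
      have h1 : S.L n < 4 ^ (S.L n) := Nat.lt_pow_self (by norm_num)
      have h2 : (4:ℕ)^(S.L n + 1) ≤ 4^k := Nat.pow_le_pow_right (by norm_num) (by omega)
      have h3 : (4:ℕ)^(S.L n + 1) = 4 * 4^(S.L n) := by ring
      omega
    set J : ℕ := 4^k / S.L n with hJ
    have hvalid : ∀ j, j < J → S.valid k j := by
      intro j hj
      exact ⟨by omega, by rw [hk3]; exact hact, by rw [hk3]; exact hj⟩
    have hJ1 : 1 ≤ J := by
      rw [hJ]
      rw [Nat.one_le_div_iff (S.Lpos n)]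
      omega
    have hJk : 4^k ≤ 2 * (S.L n * J) := by
      have h1 := Nat.div_add_mod (4^k) (S.L n)
      rw [← hJ] at h1
      have h2 : 4^k % S.L n < S.L n := Nat.mod_lt _ (S.Lpos n)
      have h3 : S.L n ≤ S.L n * J := Nat.le_mul_of_pos_right _ (by omega)
      omega
    -- the intervals
    set I : ℕ → Set ℝ := fun j => Set.Icc ((S.pos k j : ℝ)) ((S.pos k j : ℝ) + S.del n)
      with hI
    have hsub : ∀ j ∈ Finset.range J, I j ⊆ T ∩ Set.Icc 0 N := by
      intro j hj
      rw [Finset.mem_range] at hj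
      intro t ht
      refine ⟨hT k j (hvalid j hj) hk3 ht, ?_, ?_⟩
      · have : (0:ℝ) ≤ (S.pos k j : ℝ) := Nat.cast_nonneg _
        exact le_trans this ht.1
      · have hub : S.pos k j + S.L (nu k) ≤ 2 * 4^k := S.pos_ub (hvalid j hj)
        have hub' : (S.pos k j : ℝ) + S.L n ≤ 2 * 4^k := by
          rw [← hk3]; exact_mod_cast hub
        have h2k : (2:ℝ) * 4^k ≤ (4:ℝ)^K := by
          have : (2:ℕ) * 4^k ≤ 4^K := by
            calc (2:ℕ) * 4^k ≤ 4 * 4^k := by omega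
              _ = 4^(k+1) := by ring
              _ ≤ 4^K := Nat.pow_le_pow_right (by norm_num) (by omega)
          exact_mod_cast this
        have hLn2 : (2:ℝ) ≤ S.L n := by exact_mod_cast S.hL2 n
        have := ht.2
        linarith [hKN]
    have hdisj : (↑(Finset.range J) : Set ℕ).PairwiseDisjoint I := by
      intro i hi j hj hij
      have key : ∀ a b : ℕ, a < b → Disjoint (I a) (I b) := by
        intro a b hab
        rw [Set.disjoint_left]
        intro t hta htb
        have h1 := S.pos_mono (k := k) hab
        have h2 : (S.pos k a : ℝ) + S.L (nu k) ≤ S.pos k b := by exact_mod_cast h1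
        have hL2 : (2:ℝ) ≤ S.L (nu k) := by exact_mod_cast S.hL2 (nu k)
        have := hta.2; have := htb.1
        linarith
      rcases hij.lt_or_gt with h | h
      · exact key i j h
      · exact (key j i h).symm
    have hmeas : volume (T ∩ Set.Icc 0 N) ≥ (J : ℝ≥0∞) * ENNReal.ofReal (S.del n) := by
      have h1 : volume (⋃ j ∈ Finset.range J, I j) = ∑ j ∈ Finset.range J, volume (I j) :=
        measure_biUnion_finset hdisj (fun j _ => measurableSet_Icc)
      have h2 : ∀ j ∈ Finset.range J, volume (I j) = ENNReal.ofReal (S.del n) := by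
        intro j _
        rw [hI]
        simp only []
        rw [Real.volume_Icc]
        congr 1
        ring
      rw [Finset.sum_congr rfl h2, Finset.sum_const, Finset.card_range, nsmul_eq_mul] at h1
      calc (J : ℝ≥0∞) * ENNReal.ofReal (S.del n) = volume (⋃ j ∈ Finset.range J, I j) :=
            h1.symm
        _ ≤ volume (T ∩ Set.Icc 0 N) := measure_mono (Set.iUnion₂_subset hsub)
    have hfin : volume (T ∩ Set.Icc 0 N) ≠ ⊤ := by
      apply ne_of_lt
      calc volume (T ∩ Set.Icc 0 N) ≤ volume (Set.Icc (0:ℝ) N) :=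
            measure_mono Set.inter_subset_right
        _ = ENNReal.ofReal (N - 0) := Real.volume_Icc
        _ < ⊤ := ENNReal.ofReal_lt_top
    have htoReal : (J:ℝ) * S.del n ≤ (volume (T ∩ Set.Icc 0 N)).toReal := by
      have h1 : ((J : ℝ≥0∞) * ENNReal.ofReal (S.del n)).toReal = (J:ℝ) * S.del n := by
        rw [ENNReal.toReal_mul, ENNReal.toReal_natCast, ENNReal.toReal_ofReal hδ0.le]
      rw [← h1]
      exact (ENNReal.toReal_le_toReal (by
        exact ENNReal.mul_ne_top (ENNReal.natCast_ne_top J) ENNReal.ofReal_ne_top) hfin).2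
        hmeas
    -- final arithmetic
    rw [le_div_iff₀ hN0]
    have hcast : ((4:ℝ))^k ≤ 2 * ((S.L n : ℝ) * J) := by
      exact_mod_cast hJk
    have hNk : N ≤ (4:ℝ)^k * 4^E := by
      calc N ≤ (4:ℝ)^(K+2) := hNK.le
        _ ≤ (4:ℝ)^(k+E) := by
            apply pow_le_pow_right₀ (by norm_num) hKk
        _ = (4:ℝ)^k * 4^E := by rw [pow_add]
    calc c * N ≤ c * ((4:ℝ)^k * 4^E) := by
          apply mul_le_mul_of_nonneg_left hNk hc0.le
      _ = S.del n * ((4:ℝ)^k / (2 * S.L n)) := by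
          rw [hc]; field_simp
      _ ≤ S.del n * J := by
          apply mul_le_mul_of_nonneg_left _ hδ0.le
          rw [div_le_iff₀ (by positivity)]
          linarith
      _ = (J:ℝ) * S.del n := by ring
      _ ≤ _ := htoReal
  -- conclude positivity of the lower density
  have hbdd : IsBoundedUnder (· ≤ ·) atTop
      (fun N : ℝ => (volume (T ∩ Set.Icc 0 N)).toReal / N) := by
    refine ⟨1, ?_⟩
    rw [eventually_map]
    filter_upwards [eventually_ge_atTop (1:ℝ)] with N hN1
    have hN0 : (0:ℝ) < N := by linarith
    have h1 : (volume (T ∩ Set.Icc 0 N)).toReal ≤ N := by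
      have h2 : volume (T ∩ Set.Icc 0 N) ≤ ENNReal.ofReal N := by
        calc volume (T ∩ Set.Icc 0 N) ≤ volume (Set.Icc (0:ℝ) N) :=
              measure_mono Set.inter_subset_right
          _ = ENNReal.ofReal (N - 0) := Real.volume_Icc
          _ = ENNReal.ofReal N := by rw [sub_zero]
      calc (volume (T ∩ Set.Icc 0 N)).toReal ≤ (ENNReal.ofReal N).toReal :=
            (ENNReal.toReal_le_toReal (ne_of_lt (lt_of_le_of_lt h2 ENNReal.ofReal_lt_top))
              ENNReal.ofReal_ne_top).2 h2
        _ = N := ENNReal.toReal_ofReal hN0.le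
    rw [div_le_one hN0]
    exact h1
  have := le_liminf_of_le (hbdd.isCoboundedUnder_ge) hmain
  calc (0:ℝ) < c := hc0
    _ ≤ _ := this

end Setup
end FHC
namespace FHC

noncomputable def rmax (f : ℕ → ℝ) (n : ℕ) : ℝ :=
  (Finset.range (n+1)).sup' (Finset.nonempty_range_iff.2 (Nat.succ_ne_zero n)) f

lemma le_rmax_of_le (f : ℕ → ℝ) {m n : ℕ} (h : m ≤ n) : f m ≤ rmax f n :=
  Finset.le_sup' f (Finset.mem_range.2 (by omega))

lemma le_rmax (f : ℕ → ℝ) (n : ℕ) : f n ≤ rmax f n := le_rmax_of_le f le_rfl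

lemma rmax_mono (f : ℕ → ℝ) : Monotone (rmax f) := by
  intro a b h
  exact Finset.sup'_mono f (Finset.range_subset_range.2 (by omega)) _

lemma rho_bound (ρ : ℝ → ℝ) (hρ : Admissible ρ)
    (htop : Tendsto ρ atTop (nhds 0)) (hbot : Tendsto ρ atBot (nhds 0)) :
    ∃ C : ℝ, 1 ≤ C ∧ ∀ x, ρ x ≤ C := by
  obtain ⟨-, hpos, M, hM, ω, hω⟩ := hρ
  set ω' : ℝ := max ω 0 with hω'def
  have hω'0 : 0 ≤ ω' := le_max_right _ _
  have hω' : ∀ τ t : ℝ, 0 < t → ρ τ ≤ M * Real.exp (ω' * t) * ρ (τ + t) := by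
    intro τ t ht
    refine le_trans (hω τ t ht) ?_
    have h1 : Real.exp (ω * t) ≤ Real.exp (ω' * t) :=
      Real.exp_le_exp.2 (mul_le_mul_of_nonneg_right (le_max_left _ _) ht.le)
    have h2 := (hpos (τ + t)).le
    have h3 : M * (Real.exp (ω * t) * ρ (τ+t)) ≤ M * (Real.exp (ω' * t) * ρ (τ+t)) :=
      mul_le_mul_of_nonneg_left (mul_le_mul_of_nonneg_right h1 h2) (by linarith)
    calc M * Real.exp (ω * t) * ρ (τ + t) = M * (Real.exp (ω * t) * ρ (τ+t)) := by ring
      _ ≤ M * (Real.exp (ω' * t) * ρ (τ+t)) := h3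
      _ = M * Real.exp (ω' * t) * ρ (τ + t) := by ring
  obtain ⟨T, hT⟩ : ∃ T : ℝ, ∀ x, T ≤ x → ρ x < 1 :=
    eventually_atTop.1 (htop.eventually (gt_mem_nhds one_pos))
  obtain ⟨B, hB⟩ : ∃ B : ℝ, ∀ x, x ≤ B → ρ x < 1 :=
    eventually_atBot.1 (hbot.eventually (gt_mem_nhds one_pos))
  set T' : ℝ := max T B with hT'def
  refine ⟨max 1 (M * Real.exp (ω' * (T' + 1 - B))), le_max_left _ _, ?_⟩
  intro x
  have hTT' : T ≤ T' := by rw [hT'def]; exact le_max_left _ _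
  have hBT' : B ≤ T' := by rw [hT'def]; exact le_max_right _ _
  by_cases hx1 : x ≤ B
  · exact le_trans (hB x hx1).le (le_max_left _ _)
  · push_neg at hx1
    by_cases hx2 : T' ≤ x
    · exact le_trans (hT x (by linarith)).le (le_max_left _ _)
    · push_neg at hx2
      have ht : 0 < T' + 1 - x := by linarith
      have h1 := hω' x (T' + 1 - x) ht
      rw [show x + (T' + 1 - x) = T' + 1 by ring] at h1
      have h2 : ρ (T' + 1) < 1 := hT _ (by linarith)
      have h3 : Real.exp (ω' * (T' + 1 - x)) ≤ Real.exp (ω' * (T' + 1 - B)) :=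
        Real.exp_le_exp.2 (mul_le_mul_of_nonneg_left (by linarith) hω'0)
      have h4 : M * Real.exp (ω' * (T' + 1 - x)) * ρ (T' + 1)
          ≤ M * Real.exp (ω' * (T' + 1 - B)) := by
        have e1 : (0:ℝ) < Real.exp (ω' * (T' + 1 - x)) := Real.exp_pos _
        have s1 : M * Real.exp (ω' * (T' + 1 - x)) * ρ (T' + 1)
            ≤ M * Real.exp (ω' * (T' + 1 - x)) * 1 :=
          mul_le_mul_of_nonneg_left h2.le (mul_nonneg (by linarith) e1.le)
        have s2 : M * Real.exp (ω' * (T' + 1 - x)) * 1 ≤ M * Real.exp (ω' * (T' + 1 - B)) := by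
          rw [mul_one]
          exact mul_le_mul_of_nonneg_left h3 (by linarith)
        linarith
      exact le_trans h1 (le_trans h4 (le_max_right _ _))

lemma rho_threshold (ρ : ℝ → ℝ)
    (htop : Tendsto ρ atTop (nhds 0)) (hbot : Tendsto ρ atBot (nhds 0))
    {ε : ℝ} (hε : 0 < ε) : ∃ D : ℝ, 0 ≤ D ∧ ∀ x, D ≤ |x| → ρ x ≤ ε := by
  obtain ⟨A, hA⟩ : ∃ A : ℝ, ∀ x, A ≤ x → ρ x < ε :=
    eventually_atTop.1 (htop.eventually (gt_mem_nhds hε))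
  obtain ⟨B, hB⟩ : ∃ B : ℝ, ∀ x, x ≤ B → ρ x < ε :=
    eventually_atBot.1 (hbot.eventually (gt_mem_nhds hε))
  refine ⟨max 0 (max A (-B)), le_max_left _ _, ?_⟩
  intro x hx
  rcases le_abs.1 hx with h | h
  · exact (hA x (le_trans (le_trans (le_max_left A (-B)) (le_max_right _ _)) h)).le
  · have : x ≤ B := by
      have h2 : -B ≤ -x := le_trans (le_trans (le_max_right A (-B)) (le_max_right _ _)) h
      linarith
    exact (hB x this).le

end FHC
namespace FHC

lemma dense_family (ρ : ℝ → ℝ) (hpos : ∀ x, 0 < ρ x) (C : ℝ) (hC1 : 1 ≤ C)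
    (hρC : ∀ x, ρ x ≤ C) :
    ∃ (G : ℕ → ℝ → ℝ) (rad : ℕ → ℕ),
      (∀ n, Continuous (G n)) ∧ (∀ n, 1 ≤ rad n) ∧
      (∀ n x, ((rad n : ℝ)) ≤ |x| → G n x = 0) ∧
      (∀ n, ∃ bb : ℝ, 0 ≤ bb ∧ ∀ x, |G n x| ≤ bb) ∧
      (∀ g, MemC0rho ρ g → ∀ ε : ℝ, 0 < ε →
        ∃ n : ℕ, 1/((n:ℝ)+1) ≤ ε ∧ ∀ x, |G n x - g x| * ρ x ≤ ε) := by
  have hIcc : ∀ q : ℕ, -((q:ℝ)+1) ≤ (q:ℝ)+1 := by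
    intro q
    have : (0:ℝ) ≤ q := Nat.cast_nonneg q
    linarith
  have hex : ∀ q : ℕ, ∃ u : ℕ → C(↑(Set.Icc (-((q:ℝ)+1)) ((q:ℝ)+1)), ℝ), DenseRange u :=
    fun q => TopologicalSpace.exists_dense_seq _
  choose u hu using hex
  set cut : ℕ → ℝ → ℝ := fun q x => max 0 (min 1 ((q:ℝ)+1 - |x|)) with hcutdef
  have hcut0 : ∀ q x, 0 ≤ cut q x := fun q x => le_max_left _ _
  have hcut1 : ∀ q x, cut q x ≤ 1 := fun q x => max_le (by norm_num) (min_le_left _ _)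
  have hcutz : ∀ (q : ℕ) (x : ℝ), (q:ℝ)+1 ≤ |x| → cut q x = 0 := by
    intro q x hx
    exact max_eq_left (le_trans (min_le_right _ _) (by linarith))
  have hcuto : ∀ (q : ℕ) (x : ℝ), |x| ≤ (q:ℝ) → cut q x = 1 := by
    intro q x hx
    have : min 1 ((q:ℝ)+1 - |x|) = 1 := min_eq_left (by linarith)
    rw [hcutdef]
    simp only []
    rw [this]
    exact max_eq_right (by norm_num)
  have hcutcont : ∀ q : ℕ, Continuous (cut q) :=
    fun q => continuous_const.max (continuous_const.min (continuous_const.sub continuous_abs))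
  -- the two-parameter family
  set H : ℕ → ℕ → ℝ → ℝ :=
    fun q i x => (u q i (Set.projIcc (-((q:ℝ)+1)) ((q:ℝ)+1) (hIcc q) x)) * cut q x with hHdef
  have hHcont : ∀ q i, Continuous (H q i) := by
    intro q i
    exact ((u q i).continuous.comp (continuous_projIcc)).mul (hcutcont q)
  have hHsupp : ∀ (q i : ℕ) (x : ℝ), (q:ℝ)+1 ≤ |x| → H q i x = 0 := by
    intro q i x hx
    rw [hHdef]
    simp only []
    rw [hcutz q x hx, mul_zero]
  have hHbb : ∀ q i, ∀ x, |H q i x| ≤ ‖u q i‖ := by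
    intro q i x
    rw [hHdef]
    simp only []
    rw [abs_mul]
    calc |u q i _| * |cut q x| ≤ ‖u q i‖ * 1 := by
          apply mul_le_mul _ _ (abs_nonneg _) (norm_nonneg _)
          · exact (u q i).norm_coe_le_norm _
          · rw [abs_of_nonneg (hcut0 q x)]; exact hcut1 q x
      _ = ‖u q i‖ := mul_one _
  refine ⟨fun n => H n.unpair.1.unpair.1 n.unpair.1.unpair.2,
    fun n => n.unpair.1.unpair.1 + 1, fun n => hHcont _ _, fun n => Nat.succ_le_succ (Nat.zero_le _), ?_, ?_, ?_⟩
  · intro n x hx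
    apply hHsupp
    exact_mod_cast hx
  · intro n
    exact ⟨‖u n.unpair.1.unpair.1 n.unpair.1.unpair.2‖, norm_nonneg _, fun x => hHbb _ _ x⟩
  · -- density
    intro g hg ε hε
    have hε2 : (0:ℝ) < ε/2 := by positivity
    have hC0 : (0:ℝ) < C + 1 := by linarith
    have hε3 : (0:ℝ) < ε/(2*(C+1)) := by positivity
    obtain ⟨A, hA⟩ : ∃ A : ℝ, ∀ x, A ≤ x → ‖g x * ρ x‖ < ε/2 :=
      eventually_atTop.1 (NormedAddCommGroup.tendsto_nhds_zero.1 hg.2.1 (ε/2) hε2)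
    obtain ⟨B, hB⟩ : ∃ B : ℝ, ∀ x, x ≤ B → ‖g x * ρ x‖ < ε/2 :=
      eventually_atBot.1 (NormedAddCommGroup.tendsto_nhds_zero.1 hg.2.2 (ε/2) hε2)
    obtain ⟨q, hq⟩ := exists_nat_ge (max A (-B))
    have hgq : ∀ x : ℝ, (q:ℝ) ≤ |x| → |g x| * ρ x ≤ ε/2 := by
      intro x hx
      have habs : |g x| * ρ x = ‖g x * ρ x‖ := by
        rw [Real.norm_eq_abs, abs_mul, abs_of_pos (hpos x)]
      rcases le_abs.1 hx with h | h
      · exact habs ▸ (hA x (by linarith [le_trans (le_max_left A (-B)) hq])).le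
      · have hxB : x ≤ B := by
          have := le_trans (le_max_right A (-B)) hq
          linarith
        exact habs ▸ (hB x hxB).le
    set gq : C(↑(Set.Icc (-((q:ℝ)+1)) ((q:ℝ)+1)), ℝ) :=
      ⟨fun p => g p.1, hg.1.comp continuous_subtype_val⟩ with hgqdef
    obtain ⟨i, hi⟩ := Metric.denseRange_iff.1 (hu q) gq (ε/(2*(C+1))) hε3
    have happ : ∀ p, |u q i p - g p.1| ≤ ε/(2*(C+1)) := by
      intro p
      have h := ContinuousMap.dist_apply_le_dist (f := gq) (g := u q i) p
      rw [Real.dist_eq] at h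
      have : |u q i p - g p.1| = |gq p - u q i p| := by
        rw [abs_sub_comm]
        rfl
      rw [this]
      exact le_trans h hi.le
    have hεC : ε/(2*(C+1)) * C ≤ ε/2 := by
      rw [div_mul_eq_mul_div, div_le_div_iff₀ (by positivity) (by norm_num)]
      nlinarith
    refine ⟨Nat.pair (Nat.pair q i) (Nat.ceil (1/ε)), ?_, ?_⟩
    · have h1 : (1:ℝ)/ε ≤ (Nat.ceil (1/ε) : ℝ) := Nat.le_ceil _
      have h2 : ((Nat.ceil (1/ε) : ℕ):ℝ) ≤ ((Nat.pair (Nat.pair q i) (Nat.ceil (1/ε)) : ℕ):ℝ) := by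
        exact_mod_cast Nat.right_le_pair _ _
      rw [div_le_iff₀ (by positivity)]
      calc (1:ℝ) = ε * (1/ε) := by field_simp
        _ ≤ ε * (((Nat.pair (Nat.pair q i) (Nat.ceil (1/ε)) : ℕ):ℝ) + 1) := by
            apply mul_le_mul_of_nonneg_left _ hε.le
            linarith
    · intro x
      have hunp : (Nat.pair (Nat.pair q i) (Nat.ceil (1/ε))).unpair.1.unpair = (q, i) := by
        rw [Nat.unpair_pair, Nat.unpair_pair]
      simp only [hunp]
      have hρx := hpos x
      have hρCx := hρC x
      rcases le_or_gt |x| (q:ℝ) with hc1 | hc1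
      · -- inner region
        have hmem : x ∈ Set.Icc (-((q:ℝ)+1)) ((q:ℝ)+1) := by
          rcases abs_le.1 hc1 with ⟨h1, h2⟩
          exact ⟨by linarith, by linarith⟩
        have hproj : Set.projIcc (-((q:ℝ)+1)) ((q:ℝ)+1) (hIcc q) x = ⟨x, hmem⟩ :=
          Set.projIcc_of_mem _ hmem
        have hH : H q i x = u q i ⟨x, hmem⟩ := by
          rw [hHdef]
          simp only []
          rw [hproj, hcuto q x hc1, mul_one]
        rw [hH]
        have h1 := happ ⟨x, hmem⟩
        have h2 : |u q i ⟨x, hmem⟩ - g x| * ρ x ≤ ε/(2*(C+1)) * C :=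
          mul_le_mul h1 hρCx hρx.le hε3.le
        linarith
      · rcases le_or_gt ((q:ℝ)+1) |x| with hc2 | hc2
        · -- outer region : H vanishes
          rw [hHsupp q i x hc2, zero_sub, abs_neg]
          linarith [hgq x hc1.le]
        · -- transition region
          have hmem : x ∈ Set.Icc (-((q:ℝ)+1)) ((q:ℝ)+1) := by
            rcases abs_lt.1 hc2 with ⟨h1, h2⟩
            exact ⟨by linarith, by linarith⟩
          have hproj : Set.projIcc (-((q:ℝ)+1)) ((q:ℝ)+1) (hIcc q) x = ⟨x, hmem⟩ :=
            Set.projIcc_of_mem _ hmem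
          have hH : H q i x = u q i ⟨x, hmem⟩ * cut q x := by
            rw [hHdef]
            simp only []
            rw [hproj]
          have habs : |H q i x - g x| ≤ |u q i ⟨x, hmem⟩ - g x| * cut q x
              + (1 - cut q x) * |g x| := by
            rw [hH]
            have hid : u q i ⟨x, hmem⟩ * cut q x - g x
                = (u q i ⟨x, hmem⟩ - g x) * cut q x + (cut q x - 1) * g x := by ring
            rw [hid]
            calc |(u q i ⟨x, hmem⟩ - g x) * cut q x + (cut q x - 1) * g x|
                ≤ |(u q i ⟨x, hmem⟩ - g x) * cut q x| + |(cut q x - 1) * g x| := abs_add_le _ _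
              _ = |u q i ⟨x, hmem⟩ - g x| * cut q x + (1 - cut q x) * |g x| := by
                  rw [abs_mul, abs_mul, abs_of_nonneg (hcut0 q x),
                    abs_of_nonpos (by linarith [hcut1 q x] : cut q x - 1 ≤ 0)]
                  ring
          have t1 : |H q i x - g x| * ρ x ≤ (|u q i ⟨x, hmem⟩ - g x| * cut q x
              + (1 - cut q x) * |g x|) * ρ x := mul_le_mul_of_nonneg_right habs hρx.le
          have t2 : (|u q i ⟨x, hmem⟩ - g x| * cut q x + (1 - cut q x) * |g x|) * ρ x
              = |u q i ⟨x, hmem⟩ - g x| * (cut q x * ρ x)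
                + (1 - cut q x) * (|g x| * ρ x) := by ring
          have t3 : |u q i ⟨x, hmem⟩ - g x| * (cut q x * ρ x) ≤ ε/(2*(C+1)) * C := by
            apply mul_le_mul (happ ⟨x, hmem⟩) _ (by positivity) hε3.le
            calc cut q x * ρ x ≤ 1 * C :=
                  mul_le_mul (hcut1 q x) hρCx hρx.le (by norm_num)
              _ = C := one_mul C
          have t4 : (1 - cut q x) * (|g x| * ρ x) ≤ 1 * (ε/2) := by
            apply mul_le_mul (by linarith [hcut0 q x]) (hgq x hc1.le) (by positivity)
              (by norm_num)
          linarith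

end FHC
namespace FHC

lemma modulus (G : ℝ → ℝ) (hc : Continuous G) (r : ℕ) (hsupp : ∀ x, (r:ℝ) ≤ |x| → G x = 0)
    {ε : ℝ} (hε : 0 < ε) :
    ∃ δ : ℝ, 0 < δ ∧ δ ≤ 1 ∧ ∀ τ x : ℝ, 0 ≤ τ → τ ≤ δ → |G (x+τ) - G x| ≤ ε := by
  have hK : IsCompact (Set.Icc (-(r:ℝ)-2) ((r:ℝ)+2)) := isCompact_Icc
  have huc := hK.uniformContinuousOn_of_continuous hc.continuousOn
  rw [Metric.uniformContinuousOn_iff] at huc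
  obtain ⟨δ₀, hδ₀, hucd⟩ := huc ε hε
  refine ⟨min 1 (δ₀/2), by positivity, min_le_left _ _, ?_⟩
  intro τ x hτ0 hτδ
  have hτ1 : τ ≤ 1 := le_trans hτδ (min_le_left _ _)
  have hτδ2 : τ ≤ δ₀/2 := le_trans hτδ (min_le_right _ _)
  have hr0 : (0:ℝ) ≤ r := Nat.cast_nonneg r
  by_cases hx : |x| ≤ (r:ℝ) + 1
  · have hmem1 : x ∈ Set.Icc (-(r:ℝ)-2) ((r:ℝ)+2) := by
      rcases abs_le.1 hx with ⟨h1, h2⟩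
      exact ⟨by linarith, by linarith⟩
    have hxτ : |x + τ| ≤ (r:ℝ) + 2 := by
      calc |x + τ| ≤ |x| + |τ| := abs_add_le _ _
        _ ≤ (r:ℝ) + 1 + 1 := by rw [abs_of_nonneg hτ0]; linarith
        _ = (r:ℝ) + 2 := by ring
    have hmem2 : x + τ ∈ Set.Icc (-(r:ℝ)-2) ((r:ℝ)+2) := by
      rcases abs_le.1 hxτ with ⟨h1, h2⟩
      exact ⟨by linarith, h2⟩
    have := hucd (x+τ) hmem2 x hmem1 (by
      rw [Real.dist_eq, show x + τ - x = τ by ring, abs_of_nonneg hτ0]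
      linarith)
    rw [Real.dist_eq] at this
    exact this.le
  · push_neg at hx
    have hGx : G x = 0 := hsupp x (by linarith)
    have hGxτ : G (x+τ) = 0 := by
      apply hsupp
      have h1 : |x| ≤ |x + τ| + τ := by
        have h2 := abs_sub_abs_le_abs_sub x (x + τ)
        have h3 : |x - (x+τ)| = τ := by
          rw [show x - (x+τ) = -τ by ring, abs_neg, abs_of_nonneg hτ0]
        linarith
      linarith
    rw [hGx, hGxτ, sub_zero, abs_zero]
    exact hε.le

end FHC

/-- If `ρ` is an admissible weight function on ℝ with `lim_{x→±∞} ρ(x) = 0`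
(equivalently, the translation semigroup is mixing, equivalently chaotic, on `C₀^ρ(ℝ)`),
then the translation semigroup is frequently hypercyclic on `C₀^ρ(ℝ)`. -/
theorem translation_semigroup_freqHypercyclic_of_chaotic
    (ρ : ℝ → ℝ) (hρ : Admissible ρ)
    (htop : Tendsto ρ atTop (nhds 0)) (hbot : Tendsto ρ atBot (nhds 0)) :
    FHTransC0 ρ := by
  classical
  obtain ⟨C, hC1, hρC⟩ := FHC.rho_bound ρ hρ htop hbot
  have hpos : ∀ x, 0 < ρ x := hρ.2.1
  obtain ⟨G, rad, hGcont, hrad1, hGsupp, hGbb, hdense⟩ :=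
    FHC.dense_family ρ hpos C hC1 hρC
  -- monotone radii
  set R : ℕ → ℕ := fun n => (Finset.range (n+1)).sup rad with hRdef
  have hradR : ∀ n, rad n ≤ R n := fun n => Finset.le_sup (Finset.mem_range.2 (by omega))
  have hRmono : Monotone R := fun a b h => Finset.sup_mono (Finset.range_subset_range.2 (by omega))
  have hR1 : ∀ n, 1 ≤ R n := fun n => le_trans (hrad1 n) (hradR n)
  have hRsupp : ∀ n x, ((R n : ℕ):ℝ) ≤ |x| → G n x = 0 := by
    intro n x hx
    apply hGsupp n x
    have : ((rad n : ℕ):ℝ) ≤ ((R n : ℕ):ℝ) := by exact_mod_cast hradR n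
    linarith
  -- monotone bounds
  choose braw hbraw0 hbraw using hGbb
  set b : ℕ → ℝ := FHC.rmax braw with hbdef
  have hb0 : ∀ n, 0 ≤ b n := fun n => le_trans (hbraw0 n) (FHC.le_rmax braw n)
  have hbmono : Monotone b := FHC.rmax_mono braw
  have hGb : ∀ n x, |G n x| ≤ b n := fun n x => le_trans (hbraw n x) (FHC.le_rmax braw n)
  -- thresholds for the weight
  have hdex : ∀ n : ℕ, ∃ D : ℝ, ((R n : ℕ):ℝ) + 2 ≤ D ∧
      ∀ x, D ≤ |x| → ρ x ≤ 1/(2*((n:ℝ)+1)*(1 + b n)) := by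
    intro n
    have hb := hb0 n
    have hεn : (0:ℝ) < 1/(2*((n:ℝ)+1)*(1 + b n)) := by positivity
    obtain ⟨D, hD0, hD⟩ := FHC.rho_threshold ρ htop hbot hεn
    exact ⟨max D (((R n : ℕ):ℝ)+2), le_max_right _ _,
      fun x hx => hD x (le_trans (le_max_left _ _) hx)⟩
  choose draw hdraw1 hdraw2 using hdex
  set d : ℕ → ℝ := FHC.rmax draw with hddef
  have hdmono : Monotone d := FHC.rmax_mono draw
  have hdR : ∀ n, ((R n : ℕ):ℝ) + 2 ≤ d n := fun n => le_trans (hdraw1 n) (FHC.le_rmax draw n)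
  have hρd : ∀ n x, d n ≤ |x| → ρ x ≤ 1/(2*((n:ℝ)+1)*(1 + b n)) :=
    fun n x hx => hdraw2 n x (le_trans (FHC.le_rmax draw n) hx)
  -- spacings
  set L : ℕ → ℕ := fun n => 2 + Nat.ceil (((R n : ℕ):ℝ) + 3 + d n) with hLdef
  have hL2 : ∀ n, 2 ≤ L n := fun n => Nat.le_add_right 2 _
  have hLmono : Monotone L := by
    intro a a' haa
    have h1 : ((R a : ℕ):ℝ) + 3 + d a ≤ ((R a' : ℕ):ℝ) + 3 + d a' := by
      have e1 : ((R a : ℕ):ℝ) ≤ ((R a' : ℕ):ℝ) := by exact_mod_cast hRmono haa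
      have e2 := hdmono haa
      linarith
    exact Nat.add_le_add_left (Nat.ceil_mono h1) 2
  have hL : ∀ n, ((R n : ℕ):ℝ) + 3 + d n ≤ ((L n : ℕ):ℝ) := by
    intro n
    have h1 : ((R n : ℕ):ℝ) + 3 + d n ≤ (Nat.ceil (((R n : ℕ):ℝ) + 3 + d n) : ℝ) :=
      Nat.le_ceil _
    have h2 : ((Nat.ceil (((R n : ℕ):ℝ) + 3 + d n) : ℕ) : ℝ) ≤ ((L n : ℕ):ℝ) := by
      have : Nat.ceil (((R n : ℕ):ℝ) + 3 + d n) ≤ L n := Nat.le_add_left _ 2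
      exact_mod_cast this
    linarith
  -- moduli of continuity
  have hdex2 : ∀ n : ℕ, ∃ δ : ℝ, 0 < δ ∧ δ ≤ 1 ∧ ∀ τ x : ℝ, 0 ≤ τ → τ ≤ δ →
      |G n (x+τ) - G n x| ≤ 1/(2*((n:ℝ)+1)*(1+C)) := by
    intro n
    have hCp : (0:ℝ) < 1 + C := by linarith
    have hεn : (0:ℝ) < 1/(2*((n:ℝ)+1)*(1+C)) := by positivity
    exact FHC.modulus (G n) (hGcont n) (R n) (hRsupp n) hεn
  choose del hdel1 hdel2 hdel3 using hdex2
  -- assemble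
  set St : FHC.Setup ρ := ⟨C, G, R, b, d, del, L, hpos, hC1, hρC, hGcont, hRsupp, hR1, hRmono,
    hb0, hbmono, hGb, hdR, hdmono, hρd, hL, hL2, hLmono, hdel1, hdel2, hdel3⟩ with hStdef
  refine ⟨St.F, St.F_mem htop, ?_⟩
  intro g hg ε hε
  obtain ⟨n, hn1, hn2⟩ := hdense g hg (ε/2) (by positivity)
  apply St.ldens_pos n
  intro k j hv hk
  intro t ht
  have ht0 : (0:ℝ) ≤ t := le_trans (Nat.cast_nonneg _) ht.1
  refine ⟨ht0, ?_⟩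
  intro x
  have h1 := St.main_est n k j hv hk t ht.1 ht.2 x
  have h2 := hn2 x
  have htri : |St.F (x + t) - g x| ≤ |St.F (x+t) - G n x| + |G n x - g x| := abs_sub_le _ _ _
  calc |St.F (x + t) - g x| * ρ x
      ≤ (|St.F (x+t) - G n x| + |G n x - g x|) * ρ x :=
        mul_le_mul_of_nonneg_right htri (hpos x).le
    _ = |St.F (x+t) - G n x| * ρ x + |G n x - g x| * ρ x := by ring
    _ ≤ 1/((n:ℝ)+1) + ε/2 := add_le_add h1 h2
    _ ≤ ε := by linarith
end

section
/- Let ρ be an admissible weight function on ℝ with lim_{x→±∞} ρ(x) = 0, and let k ∈ ℤ, τ ∈ D̃. Then in the normed space of bounded functions ℝ → ℝ with the supremum norm, the family (x ↦ φ_{k+τ}(x+n)·ρ(x))_{n∈ℕ} is summable and the family (x ↦ φ_{k+τ}(x−n)·ρ(x))_{n∈ℕ} is summable; equivalently, the series Σ_{n≥1} T₁ⁿ φ_{k+τ} and Σ_{n≥1} Sⁿ φ_{k+τ} converge unconditionally in C₀^ρ(ℝ), where T₁ f(x) = f(x+1) and S f(x) = f(x−1). -/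
open Filter

/-- The hat function `φ_c` at level `n`: `φ_c(x) = φ(2ⁿ(x - c))`, `φ(x) = max{0, 1-|x|}`. -/
noncomputable def phiF (n : ℕ) (c x : ℝ) : ℝ := max 0 (1 - |(2 : ℝ) ^ n * (x - c)|)

lemma phiF_nonneg (N : ℕ) (c x : ℝ) : 0 ≤ phiF N c x := le_max_left _ _

lemma phiF_le_one (N : ℕ) (c x : ℝ) : phiF N c x ≤ 1 :=
  max_le zero_le_one (by linarith [abs_nonneg ((2 : ℝ) ^ N * (x - c))])

lemma phiF_eq_zero (N : ℕ) (c x : ℝ) (h : 1 ≤ |x - c|) : phiF N c x = 0 := by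
  have h1 : (1 : ℝ) ≤ 2 ^ N := one_le_pow₀ one_le_two
  have h2 : (1 : ℝ) ≤ |(2 : ℝ) ^ N * (x - c)| := by
    rw [abs_mul, abs_of_nonneg (by positivity : (0 : ℝ) ≤ (2 : ℝ) ^ N)]
    nlinarith
  exact max_eq_left (by linarith)

lemma abs_lt_one_of_phiF_ne_zero (N : ℕ) (c x : ℝ) (h : phiF N c x ≠ 0) : |x - c| < 1 := by
  by_contra hc
  exact h (phiF_eq_zero N c x (le_of_not_gt hc))

/-- The main auxiliary summability lemma, for the `x + n` direction. -/
lemma aux_summable (ρ : ℝ → ℝ) (hpos : ∀ x, 0 ≤ ρ x)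
    (hbot : Tendsto ρ atBot (nhds 0)) (N : ℕ) (c : ℝ) :
    ∃ g : ℝ → ℝ, ∀ ε : ℝ, 0 < ε → ∃ F : Finset ℕ, ∀ G : Finset ℕ, F ⊆ G →
      ∀ x : ℝ, |(∑ n ∈ G, phiF N c (x + (n : ℝ))) - g x| * ρ x ≤ ε := by
  -- the tail-vanishing radius: for `n ≥ ⌈c + 1 - x⌉₊` the term vanishes
  have hzero : ∀ x : ℝ, ∀ n : ℕ, (c + 1 - x : ℝ) ≤ n → phiF N c (x + n) = 0 := by
    intro x n hn
    apply phiF_eq_zero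
    rw [abs_of_nonneg (by linarith)]
    linarith
  refine ⟨fun x => ∑ n ∈ Finset.range ⌈c + 1 - x⌉₊, phiF N c (x + n), ?_⟩
  intro ε hε
  -- choose B with ρ x < ε/2 for x ≤ B
  obtain ⟨B, hB⟩ := eventually_atBot.mp (hbot.eventually (eventually_lt_nhds (half_pos hε)))
  refine ⟨Finset.range ⌈c + 1 - B⌉₊, ?_⟩
  intro G hFG x
  set m : ℕ := ⌈c + 1 - x⌉₊ with hm
  set H : Finset ℕ := G ∪ Finset.range m with hH
  have hGH : G ⊆ H := Finset.subset_union_left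
  have hRH : Finset.range m ⊆ H := Finset.subset_union_right
  have hgH : (∑ n ∈ Finset.range m, phiF N c (x + n)) = ∑ n ∈ H, phiF N c (x + n) := by
    apply Finset.sum_subset hRH
    intro n _ hn
    apply hzero
    have : (m : ℝ) ≤ n := by
      exact_mod_cast Nat.le_of_not_lt (fun h => hn (Finset.mem_range.mpr h))
    calc (c + 1 - x : ℝ) ≤ m := Nat.le_ceil _
      _ ≤ n := this
  have hsplit : (∑ n ∈ H \ G, phiF N c (x + n)) + ∑ n ∈ G, phiF N c (x + n)
      = ∑ n ∈ H, phiF N c (x + n) := Finset.sum_sdiff hGH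
  have habs : |(∑ n ∈ G, phiF N c (x + (n : ℝ))) -
      ∑ n ∈ Finset.range m, phiF N c (x + n)| = ∑ n ∈ H \ G, phiF N c (x + n) := by
    rw [hgH]
    have h1 : (∑ n ∈ G, phiF N c (x + (n : ℝ))) - ∑ n ∈ H, phiF N c (x + n)
        = -(∑ n ∈ H \ G, phiF N c (x + n)) := by linarith
    rw [h1, abs_neg, abs_of_nonneg (Finset.sum_nonneg fun n _ => phiF_nonneg N c _)]
  rw [habs]
  by_cases hz : (∑ n ∈ H \ G, phiF N c (x + n)) = 0
  · rw [hz, zero_mul]; exact le_of_lt hε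
  -- the sum has at most two nonzero terms, each ≤ 1
  · have hsum2 : (∑ n ∈ H \ G, phiF N c (x + n)) ≤ 2 := by
      set a : ℝ := c - 1 - x with ha
      set s2 : Finset ℕ := {(⌊a⌋ + 1).toNat, (⌊a⌋ + 2).toNat} with hs2
      have hsub : (H \ G).filter (fun n : ℕ => phiF N c (x + (n : ℝ)) ≠ 0) ⊆ s2 := by
        intro n hn
        have hne : phiF N c (x + n) ≠ 0 := (Finset.mem_filter.mp hn).2
        have hlt := abs_lt_one_of_phiF_ne_zero N c (x + n) hne
        rw [abs_lt] at hlt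
        have h1 : a < (n : ℝ) := by simp only [ha]; linarith
        have h2 : (n : ℝ) < a + 2 := by simp only [ha]; linarith
        have hfl : ⌊a⌋ + 1 ≤ (n : ℤ) := by
          have := Int.floor_lt.mpr (by exact_mod_cast h1 : a < ((n : ℤ) : ℝ))
          omega
        have hfl2 : (n : ℤ) ≤ ⌊a⌋ + 2 := by
          have h3 : ((n : ℤ) : ℝ) < (⌊a⌋ : ℝ) + 3 := by
            have := Int.lt_floor_add_one a
            push_cast
            linarith
          have : (n : ℤ) < ⌊a⌋ + 3 := by exact_mod_cast h3
          omega
        have : (n : ℤ) = ⌊a⌋ + 1 ∨ (n : ℤ) = ⌊a⌋ + 2 := by omega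
        rcases this with h | h
        · simp [hs2, show n = (⌊a⌋ + 1).toNat by omega]
        · simp [hs2, show n = (⌊a⌋ + 2).toNat by omega]
      calc (∑ n ∈ H \ G, phiF N c (x + n))
          = ∑ n ∈ (H \ G).filter (fun n : ℕ => phiF N c (x + (n : ℝ)) ≠ 0), phiF N c (x + n) :=
            (Finset.sum_filter_ne_zero _).symm
        _ ≤ ∑ n ∈ s2, phiF N c (x + n) :=
            Finset.sum_le_sum_of_subset_of_nonneg hsub (fun n _ _ => phiF_nonneg N c _)
        _ ≤ ∑ _n ∈ s2, (1 : ℝ) := Finset.sum_le_sum fun n _ => phiF_le_one N c _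
        _ = (s2.card : ℝ) := by simp
        _ ≤ 2 := by
            have := Finset.card_insert_le ((⌊a⌋ + 1).toNat) ({(⌊a⌋ + 2).toNat} : Finset ℕ)
            simp only [hs2]
            exact_mod_cast le_trans this (by simp)
    -- some nonzero term exists; it forces x ≤ B
    obtain ⟨n, hnmem, hn0⟩ := Finset.exists_ne_zero_of_sum_ne_zero hz
    have hnG : n ∉ G := (Finset.mem_sdiff.mp hnmem).2
    have hnN0 : ⌈c + 1 - B⌉₊ ≤ n := by
      by_contra h
      exact hnG (hFG (Finset.mem_range.mpr (Nat.lt_of_not_le h)))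
    have hxn := abs_lt_one_of_phiF_ne_zero N c (x + n) hn0
    rw [abs_lt] at hxn
    have hxB : x ≤ B := by
      have h1 : (c + 1 - B : ℝ) ≤ n :=
        le_trans (Nat.le_ceil _) (by exact_mod_cast hnN0)
      linarith
    have hρx : ρ x < ε / 2 := hB x hxB
    calc (∑ n ∈ H \ G, phiF N c (x + n)) * ρ x
        ≤ 2 * (ε / 2) := by
          apply mul_le_mul hsum2 (le_of_lt hρx) (hpos x) (by norm_num)
      _ = ε := by ring

/-- Let `ρ` be admissible on ℝ with `ρ(x) → 0` as `x → ±∞`, `k ∈ ℤ`,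
`τ ∈ D̃` (say `τ ∈ Dₙ`). Then the series `Σ_{n≥1} T₁ⁿ φ_{k+τ}` and `Σ_{n≥1} Sⁿ φ_{k+τ}`
converge unconditionally in `C₀^ρ(ℝ)` (equivalently, the corresponding families are
summable for the weighted sup-norm): there is a sum function `g` such that for every
`ε > 0` some finite set `F ⊆ ℕ` satisfies `‖Σ_{n∈G} T₁ⁿ φ_{k+τ} - g‖^ρ_∞ ≤ ε` for all
finite `G ⊇ F`, and similarly for `S`. -/
theorem translates_of_hat_function_summable
    (ρ : ℝ → ℝ) (hρ : Admissible ρ)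
    (htop : Tendsto ρ atTop (nhds 0)) (hbot : Tendsto ρ atBot (nhds 0))
    (k : ℤ) (N : ℕ) (τ : ℝ) (hτ : τ ∈ Dset N) :
    (∃ g : ℝ → ℝ, ∀ ε : ℝ, 0 < ε → ∃ F : Finset ℕ, ∀ G : Finset ℕ, F ⊆ G →
        ∀ x : ℝ, |(∑ n ∈ G, phiF N ((k : ℝ) + τ) (x + (n : ℝ))) - g x| * ρ x ≤ ε) ∧
    (∃ g : ℝ → ℝ, ∀ ε : ℝ, 0 < ε → ∃ F : Finset ℕ, ∀ G : Finset ℕ, F ⊆ G →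
        ∀ x : ℝ, |(∑ n ∈ G, phiF N ((k : ℝ) + τ) (x - (n : ℝ))) - g x| * ρ x ≤ ε) := by
  have hpos : ∀ x, 0 ≤ ρ x := fun x => le_of_lt (hρ.2.1 x)
  constructor
  · exact aux_summable ρ hpos hbot N ((k : ℝ) + τ)
  · -- reflect: phiF N c (x - n) = phiF N (-c) (-x + n)
    have hrefl : ∀ x : ℝ, ∀ n : ℕ, phiF N (-(((k : ℝ) + τ))) (-x + n) = phiF N ((k : ℝ) + τ) (x - n) := by
      intro x n
      unfold phiF
      rw [show (2 : ℝ) ^ N * ((-x + n) - (-(((k : ℝ) + τ)))) =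
        -((2 : ℝ) ^ N * ((x - n) - ((k : ℝ) + τ))) by ring, abs_neg]
    obtain ⟨g', hg'⟩ := aux_summable (fun x => ρ (-x)) (fun x => hpos (-x))
      (htop.comp tendsto_neg_atBot_atTop) N (-(((k : ℝ) + τ)))
    refine ⟨fun x => g' (-x), ?_⟩
    intro ε hε
    obtain ⟨F, hF⟩ := hg' ε hε
    refine ⟨F, fun G hG x => ?_⟩
    have := hF G hG (-x)
    simp only [neg_neg] at this
    have hsum : (∑ n ∈ G, phiF N (-(((k : ℝ) + τ))) (-x + (n : ℝ)))
        = ∑ n ∈ G, phiF N ((k : ℝ) + τ) (x - (n : ℝ)) :=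
      Finset.sum_congr rfl fun n _ => hrefl x n
    rwa [hsum] at this
end
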